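/- arXiv:2006.01560 — 12 statements merged into one kernel-verified Lean document; each statement's English description precedes it below -/
import Mathlib

section
/- If T is a bounded positive linear operator on a Banach lattice with operator norm at most 1 (a substochastic operator) and Ker(I - T) = {0}, then 1 belongs to the resolvent set of T if and only if the spectral radius of T is strictly less than 1. -/
open Filter Topology

section Aux

variable {X : Type*} [NormedAddCommGroup X] [Lattice X] [HasSolidNorm X] [IsOrderedAddMonoid X] [NormedSpace ℝ X] [CompleteSpace X]

private lemma aux_nsmul_pow2 : ∀ (k : ℕ) (z : X), 0 ≤ (2 ^ k) • z → 0 ≤ z := by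
  intro k
  induction k with
  | zero => intro z hz; simpa using hz
  | succ k ih =>
      intro z hz
      refine nsmul_two_semiclosed (ih (2 • z) ?_)
      have h : (2 ^ (k+1)) • z = 2 ^ k • (2 • z) := by
        rw [pow_succ, mul_comm, mul_nsmul]
      rwa [h] at hz
      
private lemma aux_smul_nonneg {t : ℝ} (ht : 0 ≤ t) {y : X} (hy : 0 ≤ y) : 0 ≤ t • y := by
  -- approximate `t` by dyadic rationals
  have key : ∀ k : ℕ, 0 ≤ ((⌊t * 2 ^ k⌋₊ : ℝ) / 2 ^ k) • y := by
    intro k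
    refine aux_nsmul_pow2 k _ ?_
    have h2 : ((2 : ℝ) ^ k) ≠ 0 := by positivity
    have : (2 ^ k : ℕ) • (((⌊t * 2 ^ k⌋₊ : ℝ) / 2 ^ k) • y) = (⌊t * 2 ^ k⌋₊ : ℕ) • y := by
      rw [← Nat.cast_smul_eq_nsmul ℝ (2 ^ k), smul_smul, ← Nat.cast_smul_eq_nsmul ℝ ⌊t * 2 ^ k⌋₊]
      congr 1
      push_cast
      field_simp
    rw [this]
    exact nsmul_nonneg hy _
  have htend : Tendsto (fun k : ℕ => ((⌊t * 2 ^ k⌋₊ : ℝ) / 2 ^ k)) atTop (𝓝 t) := by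
    have hlow : ∀ k : ℕ, t - (2 : ℝ)⁻¹ ^ k ≤ ((⌊t * 2 ^ k⌋₊ : ℝ) / 2 ^ k) := by
      intro k
      have h2 : (0 : ℝ) < 2 ^ k := by positivity
      rw [sub_le_iff_le_add, div_add' _ _ _ (ne_of_gt h2), le_div_iff₀ h2]
      have := (Nat.sub_one_lt_floor (t * 2 ^ k)).le
      calc t * 2 ^ k = (t * 2 ^ k - 1) + 1 := by ring
        _ ≤ (⌊t * 2 ^ k⌋₊ : ℝ) + 1 := by linarith [Nat.sub_one_lt_floor (t * 2 ^ k)]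
        _ ≤ (⌊t * 2 ^ k⌋₊ : ℝ) + (2 : ℝ)⁻¹ ^ k * 2 ^ k := by
            have : (2 : ℝ)⁻¹ ^ k * 2 ^ k = 1 := by
              rw [← mul_pow]; norm_num
            rw [this]
    have hhigh : ∀ k : ℕ, ((⌊t * 2 ^ k⌋₊ : ℝ) / 2 ^ k) ≤ t := by
      intro k
      have h2 : (0 : ℝ) < 2 ^ k := by positivity
      rw [div_le_iff₀ h2]
      exact Nat.floor_le (by positivity)
    have h0 : Tendsto (fun k : ℕ => t - (2 : ℝ)⁻¹ ^ k) atTop (𝓝 t) := by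
      have := tendsto_pow_atTop_nhds_zero_of_lt_one (by norm_num : (0:ℝ) ≤ 2⁻¹) (by norm_num : (2:ℝ)⁻¹ < 1)
      simpa using tendsto_const_nhds.sub this
    exact tendsto_of_tendsto_of_tendsto_of_le_of_le h0 tendsto_const_nhds hlow hhigh
  have : Tendsto (fun k : ℕ => ((⌊t * 2 ^ k⌋₊ : ℝ) / 2 ^ k) • y) atTop (𝓝 (t • y)) :=
    htend.smul_const y
  exact ge_of_tendsto this (Eventually.of_forall key)

private lemma aux_pow_pos (T : X →L[ℝ] X) (hpos : ∀ u : X, 0 ≤ u → 0 ≤ T u) :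
    ∀ (n : ℕ) (u : X), 0 ≤ u → 0 ≤ (T ^ n) u := by
  intro n
  induction n with
  | zero => intro u hu; simpa using hu
  | succ n ih =>
      intro u hu
      rw [pow_succ, ContinuousLinearMap.mul_apply]
      exact ih _ (hpos u hu)

/-- Positivity of the inverse of `1 - T`. -/
private lemma aux_inv_pos (T : X →L[ℝ] X) (hpos : ∀ u : X, 0 ≤ u → 0 ≤ T u)
    (hnorm : ‖T‖ ≤ 1) (hu : IsUnit ((1 : X →L[ℝ] X) - T)) :
    ∀ u : X, 0 ≤ u → 0 ≤ Ring.inverse ((1 : X →L[ℝ] X) - T) u := by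
  intro x hx
  have hcont : Tendsto (fun t : ℝ => Ring.inverse ((1 : X →L[ℝ] X) - t • T))
      (𝓝[<] (1 : ℝ)) (𝓝 (Ring.inverse ((1 : X →L[ℝ] X) - T))) := by
    have h1 : ContinuousAt (Ring.inverse : (X →L[ℝ] X) → (X →L[ℝ] X)) ((1 : X →L[ℝ] X) - T) := by
      have := NormedRing.inverse_continuousAt hu.unit
      rwa [hu.unit_spec] at this
    have h2 : Tendsto (fun t : ℝ => (1 : X →L[ℝ] X) - t • T) (𝓝 1)
        (𝓝 ((1 : X →L[ℝ] X) - T)) := by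
      have h2' : Continuous (fun t : ℝ => (1 : X →L[ℝ] X) - t • T) :=
        continuous_const.sub (continuous_id.smul continuous_const)
      have := h2'.continuousAt (x := (1:ℝ))
      rwa [ContinuousAt, one_smul] at this
    have h3 : Tendsto (fun t : ℝ => Ring.inverse ((1 : X →L[ℝ] X) - t • T)) (𝓝 1)
        (𝓝 (Ring.inverse ((1 : X →L[ℝ] X) - T))) := Filter.Tendsto.comp h1 h2
    exact h3.mono_left nhdsWithin_le_nhds
  have happ : Tendsto (fun t : ℝ => Ring.inverse ((1 : X →L[ℝ] X) - t • T) x)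
      (𝓝[<] (1 : ℝ)) (𝓝 (Ring.inverse ((1 : X →L[ℝ] X) - T) x)) := by
    have hc : Continuous (fun A : X →L[ℝ] X => A x) :=
      (ContinuousLinearMap.apply ℝ X x).continuous
    exact (hc.continuousAt.tendsto).comp hcont
  refine ge_of_tendsto happ ?_
  filter_upwards [Ioo_mem_nhdsLT_of_mem (by constructor <;> norm_num : (1:ℝ) ∈ Set.Ioc (0:ℝ) 1)]
    with t ht
  obtain ⟨ht0, ht1⟩ := ht
  have hlt : ‖t • T‖ < 1 := by
    calc ‖t • T‖ ≤ ‖t‖ * ‖T‖ := norm_smul_le t T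
      _ ≤ ‖t‖ * 1 := mul_le_mul_of_nonneg_left hnorm (norm_nonneg _)
      _ = |t| := by rw [mul_one]; rfl
      _ < 1 := by rw [abs_of_pos ht0]; exact ht1
  rw [← geom_series_eq_inverse _ hlt]
  have hsum : Summable (fun n : ℕ => (t • T) ^ n) := summable_geometric_of_norm_lt_one hlt
  have : (∑' n : ℕ, (t • T) ^ n) x = ∑' n : ℕ, ((t • T) ^ n) x := by
    exact (ContinuousLinearMap.apply ℝ X x).map_tsum hsum
  rw [this]
  refine tsum_nonneg fun n => ?_
  refine aux_pow_pos (t • T) (fun u hu => ?_) n x hx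
  rw [ContinuousLinearMap.smul_apply]
  exact aux_smul_nonneg ht0.le (hpos u hu)

end Aux

/-- For a substochastic operator `T` on a Banach lattice with trivial fixed space of `I - T`,
`1` is in the resolvent set of `T` iff the spectral radius of `T` is strictly less than `1`. -/
theorem stmt_0 {X : Type*} [NormedAddCommGroup X] [Lattice X] [HasSolidNorm X] [IsOrderedAddMonoid X] [NormedSpace ℝ X] [CompleteSpace X]
    (T : X →L[ℝ] X) (hpos : ∀ u : X, 0 ≤ u → 0 ≤ T u) (hnorm : ‖T‖ ≤ 1)
    (hker : ∀ u : X, T u = u → u = 0) :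
    (1 : ℝ) ∈ resolventSet ℝ T ↔ spectralRadius ℝ T < 1 := by
  constructor
  · intro h1
    rcases subsingleton_or_nontrivial X with hX | hX
    · have : Subsingleton (X →L[ℝ] X) := ⟨fun A B => by ext x; exact Subsingleton.elim _ _⟩
      have hemp : spectrum ℝ T = ∅ := by
        ext μ
        simp [spectrum.mem_iff, isUnit_of_subsingleton]
      simp [spectralRadius, hemp]
    -- the nontrivial case
    have hu : IsUnit ((1 : X →L[ℝ] X) - T) := by
      have := spectrum.mem_resolventSet_iff.mp h1
      rwa [map_one] at this
    set S := Ring.inverse ((1 : X →L[ℝ] X) - T) with hSdef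
    have hS : ∀ u : X, 0 ≤ u → 0 ≤ S u := aux_inv_pos T hpos hnorm hu
    have hScancel : S * ((1 : X →L[ℝ] X) - T) = 1 := Ring.inverse_mul_cancel _ hu
    -- `1 + T` is bounded below
    have key : ∀ x : X, ‖x‖ ≤ ‖S‖ * ‖x + T x‖ := by
      intro x
      have habs1 : |x| - T |x| ≤ |x + T x| := by
        have h1' : |x| ≤ |x + T x| + |T x| := by
          rw [abs_le']
          constructor
          · calc x = (x + T x) + (-(T x)) := by abel
              _ ≤ |x + T x| + |T x| := add_le_add (le_abs_self _) (neg_le_abs _)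
          · calc -x = -(x + T x) + T x := by abel
              _ ≤ |x + T x| + |T x| := add_le_add (neg_le_abs _) (le_abs_self _)
        have h2' : |T x| ≤ T |x| := by
          rw [abs_le']
          constructor
          · have h := hpos _ (sub_nonneg.mpr (le_abs_self x))
            rw [map_sub] at h
            exact sub_nonneg.mp h
          · have h := hpos _ (neg_le_iff_add_nonneg.mp (neg_le_abs x))
            rw [map_add] at h
            exact neg_le_iff_add_nonneg.mpr h
        refine sub_le_iff_le_add.mpr (h1'.trans ?_)
        exact add_le_add_right h2' _
      have habs2 : |x| ≤ S (|x + T x|) := by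
        have hmono : S (|x| - T |x|) ≤ S (|x + T x|) := by
          have h := hS _ (sub_nonneg.mpr habs1)
          rw [map_sub] at h
          exact sub_nonneg.mp h
        have heq : S (|x| - T |x|) = |x| := by
          have h : (S * ((1 : X →L[ℝ] X) - T)) |x| = |x| := by rw [hScancel]; rfl
          rw [ContinuousLinearMap.mul_apply] at h
          simpa [ContinuousLinearMap.sub_apply] using h
        exact heq ▸ hmono
      have hnn : 0 ≤ S (|x + T x|) := hS _ (abs_nonneg _)
      have : ‖x‖ ≤ ‖S (|x + T x|)‖ := by
        rw [← norm_abs_eq_norm x]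
        refine HasSolidNorm.solid ?_
        rwa [abs_abs, abs_of_nonneg hnn]
      calc ‖x‖ ≤ ‖S (|x + T x|)‖ := this
        _ ≤ ‖S‖ * ‖|x + T x|‖ := S.le_opNorm _
        _ = ‖S‖ * ‖x + T x‖ := by rw [norm_abs_eq_norm]
    have hone : (1 : X →L[ℝ] X) ≠ 0 := by
      intro h
      obtain ⟨x, hx⟩ := exists_ne (0 : X)
      apply hx
      have := congrArg (fun A : X →L[ℝ] X => A x) h
      simpa using this
    have hSpos : (0 : ℝ) < ‖S‖ := by
      refine norm_pos_iff.mpr fun h0 => ?_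
      rw [h0, zero_mul] at hScancel
      exact hone hScancel.symm
    set c : ℝ := ‖S‖⁻¹ with hc
    have hcpos : 0 < c := inv_pos.mpr hSpos
    have hlow : ∀ x : X, c * ‖x‖ ≤ ‖x + T x‖ := by
      intro x
      rw [hc, inv_mul_le_iff₀ hSpos]
      exact key x
    -- `-1` is in the resolvent set
    have hm1 : (-1 : ℝ) ∈ resolventSet ℝ T := by
      rw [spectrum.mem_resolventSet_iff]
      have : (algebraMap ℝ (X →L[ℝ] X)) (-1) - T = -((1 : X →L[ℝ] X) + T) := by
        rw [map_neg, map_one]; abel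
      rw [this, IsUnit.neg_iff]
      -- perturbation argument from `(1 + c/4) + T`
      have hBunit : IsUnit (((1 : ℝ) + c/4) • (1 : X →L[ℝ] X) + T) := by
        have hnot : -((1:ℝ) + c/4) ∉ spectrum ℝ T := by
          intro hmem
          have := spectrum.subset_closedBall_norm T hmem
          rw [Metric.mem_closedBall, dist_zero_right] at this
          have h1 : ‖-((1:ℝ) + c/4)‖ = 1 + c/4 := by
            rw [norm_neg, Real.norm_eq_abs, abs_of_pos (by linarith)]
          rw [h1] at this
          linarith [hnorm, this]
        have := spectrum.notMem_iff.mp hnot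
        have heq : (algebraMap ℝ (X →L[ℝ] X)) (-((1:ℝ) + c/4)) - T
            = -(((1 : ℝ) + c/4) • (1 : X →L[ℝ] X) + T) := by
          rw [Algebra.algebraMap_eq_smul_one, neg_smul]; abel
        rwa [heq, IsUnit.neg_iff] at this
      set B := hBunit.unit with hBdef
      have hBval : (B : X →L[ℝ] X) = ((1 : ℝ) + c/4) • (1 : X →L[ℝ] X) + T := hBunit.unit_spec
      -- `B` is bounded below by `3c/4`
      have hBlow : ∀ x : X, (3 * c / 4) * ‖x‖ ≤ ‖(B : X →L[ℝ] X) x‖ := by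
        intro x
        have : (B : X →L[ℝ] X) x = (x + T x) + (c/4) • x := by
          rw [hBval]
          simp [ContinuousLinearMap.add_apply, ContinuousLinearMap.smul_apply, add_smul, one_smul]
          abel
        rw [this]
        have h1 : ‖x + T x‖ ≤ ‖(x + T x) + (c/4) • x‖ + ‖(c/4) • x‖ := by
          have := norm_add_le ((x + T x) + (c/4) • x) (-((c/4) • x))
          simpa using this
        have h2 : ‖(c/4) • x‖ = (c/4) * ‖x‖ := by
          rw [norm_smul, Real.norm_eq_abs, abs_of_pos (by linarith)]
        have := hlow x
        linarith
      -- bound on the inverse of `B`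
      have hBinv : ‖((B⁻¹ : (X →L[ℝ] X)ˣ) : X →L[ℝ] X)‖ ≤ (3 * c / 4)⁻¹ := by
        refine ContinuousLinearMap.opNorm_le_bound _ (by positivity) fun y => ?_
        have h1 : (B : X →L[ℝ] X) (((B⁻¹ : (X →L[ℝ] X)ˣ) : X →L[ℝ] X) y) = y := by
          have : ((B * B⁻¹ : (X →L[ℝ] X)ˣ) : X →L[ℝ] X) y = y := by
            rw [mul_inv_cancel]; rfl
          rwa [Units.val_mul, ContinuousLinearMap.mul_apply] at this
        have := hBlow (((B⁻¹ : (X →L[ℝ] X)ˣ) : X →L[ℝ] X) y)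
        rw [h1] at this
        rw [inv_mul_eq_div, le_div_iff₀ (by positivity)]
        linarith
      have hBinvpos : (0 : ℝ) < ‖((B⁻¹ : (X →L[ℝ] X)ˣ) : X →L[ℝ] X)‖ := by
        refine norm_pos_iff.mpr fun h0 => ?_
        have : ((B⁻¹ * B : (X →L[ℝ] X)ˣ) : X →L[ℝ] X) = 1 := by rw [inv_mul_cancel]; rfl
        rw [Units.val_mul, h0, zero_mul] at this
        exact hone this.symm
      have hnear : ‖((1 : X →L[ℝ] X) + T) - (B : X →L[ℝ] X)‖
          < ‖((B⁻¹ : (X →L[ℝ] X)ˣ) : X →L[ℝ] X)‖⁻¹ := by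
        have h1 : ((1 : X →L[ℝ] X) + T) - (B : X →L[ℝ] X) = -((c/4) • (1 : X →L[ℝ] X)) := by
          rw [hBval, add_smul, one_smul]; abel
        have h2 : ‖((1 : X →L[ℝ] X) + T) - (B : X →L[ℝ] X)‖ = c/4 := by
          rw [h1, norm_neg, norm_smul (c/4) (1 : X →L[ℝ] X), norm_one,
            Real.norm_eq_abs, abs_of_pos (by linarith), mul_one]
        rw [h2]
        have h3 : (3 * c / 4) ≤ ‖((B⁻¹ : (X →L[ℝ] X)ˣ) : X →L[ℝ] X)‖⁻¹ := by
          have h4 : (3*c/4) * ‖((B⁻¹ : (X →L[ℝ] X)ˣ) : X →L[ℝ] X)‖ ≤ 1 := by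
            calc (3*c/4) * ‖((B⁻¹ : (X →L[ℝ] X)ˣ) : X →L[ℝ] X)‖
                ≤ (3*c/4) * (3*c/4)⁻¹ := mul_le_mul_of_nonneg_left hBinv (by positivity)
              _ = 1 := mul_inv_cancel₀ (by positivity)
          calc 3*c/4
              = (3*c/4) * (‖((B⁻¹ : (X →L[ℝ] X)ˣ) : X →L[ℝ] X)‖ * ‖((B⁻¹ : (X →L[ℝ] X)ˣ) : X →L[ℝ] X)‖⁻¹) := by
                rw [mul_inv_cancel₀ (ne_of_gt hBinvpos), mul_one]
            _ = ((3*c/4) * ‖((B⁻¹ : (X →L[ℝ] X)ˣ) : X →L[ℝ] X)‖) * ‖((B⁻¹ : (X →L[ℝ] X)ˣ) : X →L[ℝ] X)‖⁻¹ := by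
                ring
            _ ≤ 1 * ‖((B⁻¹ : (X →L[ℝ] X)ˣ) : X →L[ℝ] X)‖⁻¹ :=
                mul_le_mul_of_nonneg_right h4 (by positivity)
            _ = ‖((B⁻¹ : (X →L[ℝ] X)ˣ) : X →L[ℝ] X)‖⁻¹ := one_mul _
        linarith
      exact (Units.ofNearby B _ hnear).isUnit
    -- every spectral value has norm `< 1`
    have hlt : ∀ μ ∈ spectrum ℝ T, ‖μ‖₊ < 1 := by
      intro μ hμ
      have hle : ‖μ‖ ≤ 1 := by
        have := spectrum.subset_closedBall_norm T hμ
        rw [Metric.mem_closedBall, dist_zero_right] at this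
        linarith
      have hne1 : μ ≠ 1 := by
        intro h
        exact spectrum.mem_iff.mp (h ▸ hμ) (spectrum.mem_resolventSet_iff.mp h1)
      have hnem1 : μ ≠ -1 := by
        intro h
        exact spectrum.mem_iff.mp (h ▸ hμ) (spectrum.mem_resolventSet_iff.mp hm1)
      have habs : |μ| < 1 := by
        rcases lt_or_eq_of_le ((Real.norm_eq_abs μ) ▸ hle) with h | h
        · exact h
        · rcases (abs_eq (by norm_num : (0:ℝ) ≤ 1)).mp h with h' | h'
          · exact absurd h' hne1
          · exact absurd h' hnem1
      have : ‖μ‖ < 1 := by rwa [Real.norm_eq_abs]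
      exact_mod_cast this
    rcases Set.eq_empty_or_nonempty (spectrum ℝ T) with hemp | hne
    · simp [spectralRadius, hemp]
    · exact spectrum.spectralRadius_lt_of_forall_lt_of_nonempty hne hlt
  · intro h
    have : spectralRadius ℝ T < ‖(1 : ℝ)‖₊ := by simpa using h
    exact spectrum.mem_resolventSet_of_spectralRadius_lt this
end

section
/- Let T be a bounded linear operator on a Banach space with ‖T‖ ≤ 1. If there exist a compact operator K and n ∈ ℕ such that ‖T^n − K‖ < 1 (T is quasi-compact) and Ker(I − T) = {0}, then 1 belongs to the resolvent set of T. -/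
open Filter Topology

/-- A quasi-compact linear contraction `T` with trivial kernel of `I - T` has `1` in its
resolvent set. -/
theorem stmt_2 {X : Type*} [NormedAddCommGroup X] [NormedSpace ℝ X] [CompleteSpace X]
    (T : X →L[ℝ] X) (hnorm : ‖T‖ ≤ 1)
    (hqc : ∃ (K : X →L[ℝ] X) (n : ℕ), IsCompactOperator K ∧ ‖T ^ n - K‖ < 1)
    (hker : ∀ u : X, T u = u → u = 0) :
    (1 : ℝ) ∈ resolventSet ℝ T := by
  obtain ⟨K, n, hK, hTK⟩ := hqc
  set S : X →L[ℝ] X := 1 - T with hSdef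
  -- pointwise contraction bound for powers
  have hpow : ∀ (j : ℕ) (x : X), ‖(T ^ j) x‖ ≤ ‖x‖ := by
    intro j x
    have h1 : ‖T ^ j‖ ≤ 1 := by
      cases j with
      | zero =>
        simpa [ContinuousLinearMap.one_def] using
          (ContinuousLinearMap.norm_id_le : ‖ContinuousLinearMap.id ℝ X‖ ≤ 1)
      | succ m =>
        calc ‖T ^ (m + 1)‖ ≤ ‖T‖ ^ (m + 1) := norm_pow_le' T m.succ_pos
          _ ≤ 1 := pow_le_one₀ (norm_nonneg T) hnorm
    calc ‖(T ^ j) x‖ ≤ ‖T ^ j‖ * ‖x‖ := (T ^ j).le_opNorm x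
      _ ≤ 1 * ‖x‖ := by gcongr
      _ = ‖x‖ := one_mul _
  have hcomm : ∀ (j : ℕ) (x : X), T ((T ^ j) x) = (T ^ (j + 1)) x := by
    intro j x
    rw [← ContinuousLinearMap.mul_apply]
    congr 1
    rw [pow_succ']
  -- geometric sum identity
  have hgeom : (∑ i ∈ Finset.range n, T ^ i) * S = 1 - T ^ n := by
    have h := geom_sum_mul T n
    have h2 : (∑ i ∈ Finset.range n, T ^ i) * S
        = -((∑ i ∈ Finset.range n, T ^ i) * (T - 1)) := by
      rw [hSdef]; noncomm_ring
    rw [h2, h]; noncomm_ring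
  -- Step 1: S is bounded below
  have hbb : ∃ c > (0 : ℝ), ∀ u : X, c * ‖u‖ ≤ ‖S u‖ := by
    by_contra h
    push_neg at h
    have hseq : ∀ k : ℕ, ∃ u : X, ‖S u‖ < (1 / (k + 1)) * ‖u‖ := fun k =>
      h (1 / (k + 1)) (by positivity)
    choose u hu using hseq
    have hu0 : ∀ k, u k ≠ 0 := by
      intro k hk
      have := hu k
      rw [hk] at this
      simp at this
    set v : ℕ → X := fun k => ‖u k‖⁻¹ • u k with hv
    have hvnorm : ∀ k, ‖v k‖ = 1 := fun k =>
      norm_smul_inv_norm (hu0 k)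
    have hSv : Filter.Tendsto (fun k => S (v k)) atTop (nhds 0) := by
      have hb : ∀ k : ℕ, ‖S (v k)‖ ≤ 1 / (k + 1) := by
        intro k
        have h1 : ‖S (v k)‖ = ‖u k‖⁻¹ * ‖S (u k)‖ := by
          rw [hv]
          simp [map_smul, norm_smul]
        have h2 : ‖u k‖⁻¹ * ‖S (u k)‖ ≤ ‖u k‖⁻¹ * ((1 / (k + 1)) * ‖u k‖) := by
          gcongr
          exact (hu k).le
        have hn0 : ‖u k‖ ≠ 0 := norm_ne_zero_iff.2 (hu0 k)
        have h3 : ‖u k‖⁻¹ * ((1 / (k + 1 : ℝ)) * ‖u k‖) = 1 / (k + 1) := by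
          rw [mul_comm (1 / ((k : ℝ) + 1)) ‖u k‖, ← mul_assoc, inv_mul_cancel₀ hn0, one_mul]
        rw [h1]
        rw [h3] at h2
        exact h2
      have hlim : Filter.Tendsto (fun k : ℕ => 1 / ((k : ℝ) + 1)) atTop (nhds 0) :=
        tendsto_one_div_add_atTop_nhds_zero_nat
      refine tendsto_zero_iff_norm_tendsto_zero.2 ?_
      exact squeeze_zero (fun k => norm_nonneg _) hb hlim
    -- (1 - T^n) (v k) → 0
    have h1Tn : Filter.Tendsto (fun k => ((1 : X →L[ℝ] X) - T ^ n) (v k)) atTop (nhds 0) := by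
      have hc := ((∑ i ∈ Finset.range n, T ^ i).continuous.tendsto 0).comp hSv
      rw [map_zero] at hc
      refine hc.congr fun k => ?_
      rw [Function.comp_apply, ← ContinuousLinearMap.mul_apply, hgeom]
    -- extract convergent subsequence of K (v k)
    obtain ⟨C, hCcomp, hCsub⟩ := hK.image_closedBall_subset_compact (𝕜₁ := ℝ) 1
    have hmem : ∀ k, K (v k) ∈ C := by
      intro k
      apply hCsub
      exact ⟨v k, by simp [Metric.mem_closedBall, (hvnorm k).le, dist_zero_right], rfl⟩
    obtain ⟨w, _, φ, hφ, hconv⟩ := hCcomp.tendsto_subseq hmem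
    -- A = 1 - (T^n - K) is invertible
    set A : (X →L[ℝ] X)ˣ := Units.oneSub (T ^ n - K) hTK with hA
    have hAval : (A : X →L[ℝ] X) = 1 - (T ^ n - K) := rfl
    have hAv : Filter.Tendsto (fun i => (A : X →L[ℝ] X) (v (φ i))) atTop (nhds w) := by
      have heq : ∀ k, (A : X →L[ℝ] X) (v k)
          = ((1 : X →L[ℝ] X) - T ^ n) (v k) + K (v k) := by
        intro k
        rw [hAval]
        simp [ContinuousLinearMap.sub_apply, ContinuousLinearMap.add_apply]
        abel
      have h1 := (h1Tn.comp hφ.tendsto_atTop).add hconv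
      rw [zero_add] at h1
      refine h1.congr fun i => ?_
      rw [heq (φ i)]
      rfl
    -- v (φ i) converges
    set uu : X := (↑A⁻¹ : X →L[ℝ] X) w with huu
    have hvconv : Filter.Tendsto (fun i => v (φ i)) atTop (nhds uu) := by
      have hc := ((↑A⁻¹ : X →L[ℝ] X).continuous.tendsto w).comp hAv
      have heq : ∀ i, (↑A⁻¹ : X →L[ℝ] X) ((A : X →L[ℝ] X) (v (φ i))) = v (φ i) := by
        intro i
        rw [← ContinuousLinearMap.mul_apply, ← Units.val_mul, inv_mul_cancel]
        rfl
      refine hc.congr fun i => ?_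
      rw [Function.comp_apply, heq i]
    have hnorm1 : ‖uu‖ = 1 := by
      have h1 : Filter.Tendsto (fun i => ‖v (φ i)‖) atTop (nhds ‖uu‖) :=
        (continuous_norm.tendsto uu).comp hvconv
      have h2 : Filter.Tendsto (fun _ : ℕ => (1 : ℝ)) atTop (nhds 1) := tendsto_const_nhds
      have : (fun i => ‖v (φ i)‖) = fun _ : ℕ => (1 : ℝ) := funext fun i => hvnorm (φ i)
      rw [this] at h1
      exact tendsto_nhds_unique h1 h2
    have hSu : S uu = 0 := by
      have h1 : Filter.Tendsto (fun i => S (v (φ i))) atTop (nhds (S uu)) :=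
        (S.continuous.tendsto uu).comp hvconv
      have h2 : Filter.Tendsto (fun i => S (v (φ i))) atTop (nhds 0) :=
        hSv.comp hφ.tendsto_atTop
      exact tendsto_nhds_unique h1 h2
    have : uu = 0 := by
      apply hker
      have := hSu
      rw [hSdef] at this
      simp [ContinuousLinearMap.sub_apply, sub_eq_zero] at this
      exact this.symm
    rw [this, norm_zero] at hnorm1
    exact one_ne_zero hnorm1.symm
  obtain ⟨c, hc, hbd⟩ := hbb
  -- injectivity
  have hinj : LinearMap.ker (S : X →ₗ[ℝ] X) = ⊥ := by
    rw [LinearMap.ker_eq_bot']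
    intro x hx
    have h := hbd x
    rw [show S x = 0 from hx, norm_zero] at h
    have : ‖x‖ = 0 := by nlinarith [norm_nonneg x]
    exact norm_eq_zero.mp this
  -- closed range
  have hanti : AntilipschitzWith (⟨c, hc.le⟩ : NNReal)⁻¹ S := by
    apply S.antilipschitz_of_bound
    intro x
    have hcoe : (((⟨c, hc.le⟩ : NNReal)⁻¹ : NNReal) : ℝ) = c⁻¹ := by
      exact NNReal.coe_inv ⟨c, hc.le⟩
    rw [hcoe]

    calc ‖x‖ = c⁻¹ * (c * ‖x‖) := by field_simp
      _ ≤ c⁻¹ * ‖S x‖ := by gcongr; exact hbd x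
  have hclosed : IsClosed (Set.range (⇑S)) := hanti.isClosed_range S.uniformContinuous
  -- surjectivity via density
  have hsurj : LinearMap.range (S : X →ₗ[ℝ] X) = ⊤ := by
    rw [LinearMap.range_eq_top]
    intro y
    -- y is a limit of elements of the range
    have hmem : ∀ N : ℕ, y - ((N : ℝ) + 1)⁻¹ •
        ∑ m ∈ Finset.range (N + 1), (T ^ (m + 1)) y ∈ LinearMap.range (S : X →ₗ[ℝ] X) := by
      intro N
      have h1 : y - ((N : ℝ) + 1)⁻¹ • ∑ m ∈ Finset.range (N + 1), (T ^ (m + 1)) y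
          = ((N : ℝ) + 1)⁻¹ • ∑ m ∈ Finset.range (N + 1), (y - (T ^ (m + 1)) y) := by
        rw [Finset.sum_sub_distrib, smul_sub, Finset.sum_const, Finset.card_range,
          ← Nat.cast_smul_eq_nsmul ℝ, smul_smul]
        have : ((N : ℝ) + 1)⁻¹ * (N + 1 : ℕ) = 1 := by
          push_cast
          field_simp
        rw [this, one_smul]
      rw [h1]
      apply Submodule.smul_mem
      apply Submodule.sum_mem
      intro m _
      refine ⟨∑ j ∈ Finset.range (m + 1), (T ^ j) y, ?_⟩
      have : S (∑ j ∈ Finset.range (m + 1), (T ^ j) y)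
          = ∑ j ∈ Finset.range (m + 1), ((T ^ j) y - (T ^ (j + 1)) y) := by
        rw [map_sum]
        apply Finset.sum_congr rfl
        intro j _
        rw [hSdef]
        simp only [ContinuousLinearMap.sub_apply, ContinuousLinearMap.one_apply]
        rw [hcomm j y]
      rw [ContinuousLinearMap.coe_coe, this]
      have htel := Finset.sum_range_sub (fun j => (T ^ j) y) (m + 1)
      have : ∑ j ∈ Finset.range (m + 1), ((T ^ j) y - (T ^ (j + 1)) y)
          = -∑ j ∈ Finset.range (m + 1), ((T ^ (j + 1)) y - (T ^ j) y) := by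
        rw [← Finset.sum_neg_distrib]
        apply Finset.sum_congr rfl
        intro j _
        abel
      rw [this, htel]
      simp
    -- the averages tend to zero
    set w : ℕ → X := fun N => ((N : ℝ) + 1)⁻¹ •
        ∑ m ∈ Finset.range (N + 1), (T ^ (m + 1)) y with hw
    have hSw : ∀ N, ‖S (w N)‖ ≤ ((N : ℝ) + 1)⁻¹ * (2 * ‖y‖) := by
      intro N
      have h1 : S (∑ m ∈ Finset.range (N + 1), (T ^ (m + 1)) y)
          = T y - (T ^ (N + 2)) y := by
        have h2 : S (∑ m ∈ Finset.range (N + 1), (T ^ (m + 1)) y)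
            = ∑ m ∈ Finset.range (N + 1), ((T ^ (m + 1)) y - (T ^ (m + 2)) y) := by
          rw [map_sum]
          apply Finset.sum_congr rfl
          intro m _
          rw [hSdef]
          simp only [ContinuousLinearMap.sub_apply, ContinuousLinearMap.one_apply]
          rw [hcomm (m + 1) y]
        rw [h2]
        have h3 : ∀ m ∈ Finset.range (N + 1), (T ^ (m + 1)) y - (T ^ (m + 2)) y
            = -((fun j => (T ^ (j + 1)) y) (m + 1) - (fun j => (T ^ (j + 1)) y) m) := by
          intro m _
          show (T ^ (m + 1)) y - (T ^ (m + 2)) y = -((T ^ (m + 1 + 1)) y - (T ^ (m + 1)) y)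
          rw [neg_sub]
        rw [Finset.sum_congr rfl h3, Finset.sum_neg_distrib,
          Finset.sum_range_sub (fun j => (T ^ (j + 1)) y) (N + 1), neg_sub]
        norm_num
      have h4 : S (w N) = ((N : ℝ) + 1)⁻¹ • (T y - (T ^ (N + 2)) y) := by
        rw [hw]
        simp only [map_smul, h1]
      rw [h4, norm_smul]
      have h5 : ‖T y - (T ^ (N + 2)) y‖ ≤ 2 * ‖y‖ := by
        calc ‖T y - (T ^ (N + 2)) y‖ ≤ ‖T y‖ + ‖(T ^ (N + 2)) y‖ := norm_sub_le _ _
          _ ≤ ‖y‖ + ‖y‖ := by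
              gcongr
              · calc ‖T y‖ ≤ ‖T‖ * ‖y‖ := T.le_opNorm y
                  _ ≤ 1 * ‖y‖ := by gcongr
                  _ = ‖y‖ := one_mul _
              · exact hpow (N + 2) y
          _ = 2 * ‖y‖ := by ring
      have h6 : ‖(((N : ℝ) + 1)⁻¹)‖ = ((N : ℝ) + 1)⁻¹ := by
        rw [Real.norm_eq_abs, abs_of_pos]
        positivity
      rw [h6]
      gcongr
    have hwlim : Filter.Tendsto w atTop (nhds 0) := by
      refine tendsto_zero_iff_norm_tendsto_zero.2 ?_
      have hb : ∀ N, ‖w N‖ ≤ c⁻¹ * (((N : ℝ) + 1)⁻¹ * (2 * ‖y‖)) := by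
        intro N
        have h1 := hbd (w N)
        have h2 := hSw N
        rw [← le_div_iff₀' hc] at h1
        calc ‖w N‖ ≤ ‖S (w N)‖ / c := h1
          _ ≤ (((N : ℝ) + 1)⁻¹ * (2 * ‖y‖)) / c := by gcongr
          _ = c⁻¹ * (((N : ℝ) + 1)⁻¹ * (2 * ‖y‖)) := div_eq_inv_mul _ _
      have hlim : Filter.Tendsto (fun N : ℕ => c⁻¹ * (((N : ℝ) + 1)⁻¹ * (2 * ‖y‖)))
          atTop (nhds 0) := by
        have h1 : Filter.Tendsto (fun N : ℕ => ((N : ℝ) + 1)⁻¹) atTop (nhds 0) := by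
          simpa [one_div] using tendsto_one_div_add_atTop_nhds_zero_nat (𝕜 := ℝ)
        have := (h1.mul_const (2 * ‖y‖)).const_mul c⁻¹
        simpa using this
      exact squeeze_zero (fun N => norm_nonneg _) hb hlim
    -- conclude y ∈ range
    have hyclos : y ∈ closure (Set.range (⇑S)) := by
      have h1 : Filter.Tendsto (fun N => y - w N) atTop (nhds y) := by
        have := tendsto_const_nhds (x := y) (f := atTop (α := ℕ)) |>.sub hwlim
        simpa using this
      apply mem_closure_of_tendsto h1
      filter_upwards with N
      obtain ⟨x, hx⟩ := hmem N
      exact ⟨x, hx⟩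
    rw [hclosed.closure_eq] at hyclos
    exact hyclos
  -- build the unit
  set e : X ≃L[ℝ] X := ContinuousLinearEquiv.ofBijective S hinj hsurj with he
  have hecoe : ⇑e = ⇑S := by
    rw [he]
    exact ContinuousLinearEquiv.coeFn_ofBijective S hinj hsurj
  have hunit : IsUnit S := by
    refine ⟨⟨S, (e.symm : X →L[ℝ] X), ?_, ?_⟩, rfl⟩
    · ext x
      have : S (e.symm x) = e (e.symm x) := by rw [hecoe]
      simp [ContinuousLinearMap.mul_apply, this, e.apply_symm_apply]
    · ext x
      have : e.symm (S x) = e.symm (e x) := by rw [hecoe]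
      simp [ContinuousLinearMap.mul_apply, this, e.symm_apply_apply]
  rw [spectrum.mem_resolventSet_iff]
  simpa [hSdef] using hunit
end

section
/- Let X be a Banach lattice whose norm is additive on the positive cone (an AL space). Then there exists a unique positive linear functional α on X such that α(u) = ‖u‖ for every u in the positive cone. -/
/-- On an AL space (Banach lattice with norm additive on the positive cone) there is a unique
positive continuous linear functional `α` with `α u = ‖u‖` on the positive cone. -/
theorem stmt_3 {X : Type*} [NormedAddCommGroup X] [Lattice X] [HasSolidNorm X]
    [IsOrderedAddMonoid X] [NormedSpace ℝ X] [CompleteSpace X]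
    (hadd : ∀ u v : X, 0 ≤ u → 0 ≤ v → ‖u + v‖ = ‖u‖ + ‖v‖) :
    ∃! α : X →L[ℝ] ℝ,
      (∀ u : X, 0 ≤ u → 0 ≤ α u) ∧ (∀ u : X, 0 ≤ u → α u = ‖u‖) := by
  set f : X → ℝ := fun x => ‖x⁺‖ - ‖x⁻‖ with hf
  have hpp : ∀ a : X, a⁺ = a + a⁻ := fun a => sub_eq_iff_eq_add.mp (posPart_sub_negPart a)
  have hfadd : ∀ x y : X, f (x + y) = f x + f y := by
    intro x y
    have hel : (x + y)⁺ + (x⁻ + y⁻) = (x + y)⁻ + (x⁺ + y⁺) := by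
      rw [hpp (x + y), hpp x, hpp y]; abel
    have h1 : ‖(x + y)⁺ + (x⁻ + y⁻)‖ = ‖(x + y)⁺‖ + (‖x⁻‖ + ‖y⁻‖) := by
      rw [hadd _ _ (posPart_nonneg _) (add_nonneg (negPart_nonneg _) (negPart_nonneg _)),
        hadd _ _ (negPart_nonneg _) (negPart_nonneg _)]
    have h2 : ‖(x + y)⁻ + (x⁺ + y⁺)‖ = ‖(x + y)⁻‖ + (‖x⁺‖ + ‖y⁺‖) := by
      rw [hadd _ _ (negPart_nonneg _) (add_nonneg (posPart_nonneg _) (posPart_nonneg _)),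
        hadd _ _ (posPart_nonneg _) (posPart_nonneg _)]
    rw [hel] at h1
    simp only [hf]
    linarith [h1.symm.trans h2]
  have hbound : ∀ x : X, ‖f x‖ ≤ 1 * ‖x‖ := by
    intro x
    have h1 : ‖x⁺ + x⁻‖ = ‖x⁺‖ + ‖x⁻‖ := hadd _ _ (posPart_nonneg _) (negPart_nonneg _)
    rw [posPart_add_negPart, norm_abs_eq_norm] at h1
    have := norm_nonneg (x⁺)
    have := norm_nonneg (x⁻)
    rw [Real.norm_eq_abs, abs_le]
    constructor <;> simp only [hf] <;> linarith
  set F : X →+ ℝ := AddMonoidHom.mk' f hfadd with hF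
  have hcont : Continuous F := (AddMonoidHomClass.lipschitz_of_bound F 1 hbound).continuous
  set α : X →L[ℝ] ℝ := ⟨F.toRealLinearMap hcont, hcont⟩ with hα
  have hαx : ∀ x : X, α x = ‖x⁺‖ - ‖x⁻‖ := fun x => rfl
  have hpos : ∀ u : X, 0 ≤ u → α u = ‖u‖ := by
    intro u hu
    rw [hαx, posPart_eq_self.mpr hu, negPart_eq_zero.mpr hu, norm_zero, sub_zero]
  refine ⟨α, ⟨fun u hu => by rw [hpos u hu]; exact norm_nonneg u, hpos⟩, ?_⟩
  rintro β ⟨-, hβ⟩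
  ext x
  have hx : x = x⁺ - x⁻ := (posPart_sub_negPart x).symm
  have hβx : β x = ‖x⁺‖ - ‖x⁻‖ := by
    conv_lhs => rw [hx]
    rw [map_sub, hβ _ (posPart_nonneg x), hβ _ (negPart_nonneg x)]
  rw [hβx, hαx]
end

section
/- Let X be an AL space, T : X → X a substochastic operator with Ker(I − T) = {0}, and suppose there exists a quasi-interior element u > 0 (i.e., a positive element whose order ideal is dense) with T u ≤ u. Then for every v ∈ X the Cesàro averages (1/N) Σ_{n=0}^{N−1} T^n v converge to 0. -/
open Filter Topology

/-- If a substochastic operator `T` on an AL space has trivial fixed space and dominates a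
quasi-interior element (`T u ≤ u`, `u > 0`, the order ideal of `u` dense), then all Cesàro
averages of `T` converge to `0`. -/
theorem stmt_7 {X : Type*} [NormedAddCommGroup X] [Lattice X] [HasSolidNorm X]
    [IsOrderedAddMonoid X] [NormedSpace ℝ X] [CompleteSpace X]
    (hadd : ∀ u v : X, 0 ≤ u → 0 ≤ v → ‖u + v‖ = ‖u‖ + ‖v‖)
    (T : X →L[ℝ] X) (hpos : ∀ w : X, 0 ≤ w → 0 ≤ T w) (hnorm : ‖T‖ ≤ 1)
    (hker : ∀ w : X, T w = w → w = 0)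
    (u : X) (hu : 0 ≤ u) (hune : u ≠ 0)
    (hqi : Dense {w : X | ∃ c : ℝ, |w| ≤ c • u})
    (hTu : T u ≤ u) :
    ∀ v : X, Tendsto (fun N : ℕ => (N : ℝ)⁻¹ • ∑ n ∈ Finset.range N, (T ^ n) v)
      atTop (𝓝 0) := by
  -- positivity of powers
  have hpowpos : ∀ n : ℕ, ∀ w : X, 0 ≤ w → 0 ≤ (T ^ n) w := by
    intro n
    induction n with
    | zero => intro w hw; simpa using hw
    | succ n ih =>
      intro w hw
      simp only [pow_succ, ContinuousLinearMap.mul_apply]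
      exact ih _ (hpos w hw)
  have hpowmono : ∀ n : ℕ, ∀ a b : X, a ≤ b → (T ^ n) a ≤ (T ^ n) b := by
    intro n a b h
    have := hpowpos n (b - a) (sub_nonneg.2 h)
    rwa [map_sub, sub_nonneg] at this
  -- norm bound for powers
  have hpownorm : ∀ n : ℕ, ∀ x : X, ‖(T ^ n) x‖ ≤ ‖x‖ := by
    intro n
    induction n with
    | zero => intro x; simp
    | succ n ih =>
      intro x
      simp only [pow_succ, ContinuousLinearMap.mul_apply]
      calc ‖(T ^ n) (T x)‖ ≤ ‖T x‖ := ih _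
        _ ≤ ‖T‖ * ‖x‖ := T.le_opNorm x
        _ ≤ 1 * ‖x‖ := by gcongr
        _ = ‖x‖ := one_mul _
  set w : ℕ → X := fun n => (T ^ n) u with hw
  have hwpos : ∀ n, 0 ≤ w n := fun n => hpowpos n u hu
  -- w is antitone
  have hwdec : ∀ n, w (n + 1) ≤ w n := by
    intro n
    simp only [hw, pow_succ, ContinuousLinearMap.mul_apply]
    exact hpowmono n _ _ hTu
  have hwanti : Antitone w := antitone_nat_of_succ_le hwdec
  set a : ℕ → ℝ := fun n => ‖w n‖ with ha
  have hakey : ∀ m n : ℕ, m ≤ n → a m = a n + ‖w m - w n‖ := by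
    intro m n hmn
    have h1 : 0 ≤ w m - w n := sub_nonneg.2 (hwanti hmn)
    have := hadd (w n) (w m - w n) (hwpos n) h1
    rwa [add_sub_cancel] at this
  have haanti : Antitone a := by
    intro m n hmn
    have := hakey m n hmn
    have h2 : 0 ≤ ‖w m - w n‖ := norm_nonneg _
    linarith
  have habdd : BddBelow (Set.range a) := ⟨0, by rintro x ⟨n, rfl⟩; exact norm_nonneg _⟩
  have hacauchy : CauchySeq a :=
    (tendsto_atTop_ciInf haanti habdd).cauchySeq
  -- w is Cauchy
  have hwcauchy : CauchySeq w := by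
    rw [Metric.cauchySeq_iff] at hacauchy ⊢
    intro ε hε
    obtain ⟨N, hN⟩ := hacauchy ε hε
    refine ⟨N, fun m hm n hn => ?_⟩
    have key : ∀ p q : ℕ, p ≤ q → dist (w p) (w q) ≤ dist (a p) (a q) := by
      intro p q hpq
      have h1 := hakey p q hpq
      have h2 : (0:ℝ) ≤ ‖w p - w q‖ := norm_nonneg _
      rw [dist_eq_norm, Real.dist_eq]
      rw [show ‖w p - w q‖ = a p - a q by linarith]
      exact le_abs_self _
    rcases le_total m n with h | h
    · exact lt_of_le_of_lt (key m n h) (hN m hm n hn)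
    · rw [dist_comm]
      exact lt_of_le_of_lt (key n m h) (hN n hn m hm)
  obtain ⟨L, hL⟩ := cauchySeq_tendsto_of_complete hwcauchy
  -- T L = L, hence L = 0
  have hTL : T L = L := by
    have h1 : Tendsto (fun n => w (n + 1)) atTop (𝓝 L) :=
      hL.comp (tendsto_add_atTop_nat 1)
    have h2 : Tendsto (fun n => T (w n)) atTop (𝓝 (T L)) :=
      (T.continuous.tendsto L).comp hL
    have heq : (fun n => w (n + 1)) = fun n => T (w n) := by
      funext n
      simp only [hw, pow_succ', ContinuousLinearMap.mul_apply]
    rw [heq] at h1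
    exact tendsto_nhds_unique h2 h1
  have hL0 : L = 0 := hker L hTL
  rw [hL0] at hL
  -- pointwise convergence of T^n v for ideal elements
  have hideal : ∀ v : X, (∃ c : ℝ, |v| ≤ c • u) →
      Tendsto (fun n : ℕ => (T ^ n) v) atTop (𝓝 0) := by
    rintro v ⟨c, hc⟩
    have hbound : ∀ n : ℕ, ‖(T ^ n) v‖ ≤ |c| * ‖w n‖ := by
      intro n
      have habs : |(T ^ n) v| ≤ (T ^ n) |v| := by
        have h1 : (T ^ n) v ≤ (T ^ n) |v| := hpowmono n _ _ (le_abs_self v)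
        have h2 : -((T ^ n) v) ≤ (T ^ n) |v| := by
          have := hpowmono n _ _ (neg_le.1 (neg_le_abs v))
          rw [map_neg] at this
          exact neg_le.1 this
        exact sup_le h1 h2

      have h2 : (T ^ n) |v| ≤ c • w n := by
        have := hpowmono n _ _ hc
        rwa [map_smul] at this
      have hle : |(T ^ n) v| ≤ c • w n := habs.trans h2
      have hnn : 0 ≤ c • w n := (abs_nonneg _).trans hle
      have h3 : |(T ^ n) v| ≤ |c • w n| := by rwa [abs_of_nonneg hnn]
      calc ‖(T ^ n) v‖ ≤ ‖c • w n‖ := norm_le_norm_of_abs_le_abs h3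
        _ = |c| * ‖w n‖ := by rw [norm_smul, Real.norm_eq_abs]
    rw [tendsto_zero_iff_norm_tendsto_zero]
    have h4 : Tendsto (fun n : ℕ => |c| * ‖w n‖) atTop (𝓝 0) := by
      have := (tendsto_zero_iff_norm_tendsto_zero.1 hL).const_mul |c|
      simpa using this
    exact squeeze_zero (fun n => norm_nonneg _) hbound h4
  -- Cesàro for ideal elements
  have hcesideal : ∀ v : X, (∃ c : ℝ, |v| ≤ c • u) →
      Tendsto (fun N : ℕ => (N : ℝ)⁻¹ • ∑ n ∈ Finset.range N, (T ^ n) v)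
        atTop (𝓝 0) := fun v hv => (hideal v hv).cesaro_smul
  -- norm bound for averages
  have havg : ∀ (N : ℕ) (x : X),
      ‖(N : ℝ)⁻¹ • ∑ n ∈ Finset.range N, (T ^ n) x‖ ≤ ‖x‖ := by
    intro N x
    rcases Nat.eq_zero_or_pos N with rfl | hN
    · simp
    have hsum : ‖∑ n ∈ Finset.range N, (T ^ n) x‖ ≤ (N : ℝ) * ‖x‖ := by
      calc ‖∑ n ∈ Finset.range N, (T ^ n) x‖
          ≤ ∑ n ∈ Finset.range N, ‖(T ^ n) x‖ := norm_sum_le _ _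
        _ ≤ ∑ _n ∈ Finset.range N, ‖x‖ := Finset.sum_le_sum fun n _ => hpownorm n x
        _ = (N : ℝ) * ‖x‖ := by simp [mul_comm]
    have hNpos : (0 : ℝ) < N := Nat.cast_pos.2 hN
    rw [norm_smul, Real.norm_eq_abs, abs_of_nonneg (inv_nonneg.2 hNpos.le)]
    calc (N : ℝ)⁻¹ * ‖∑ n ∈ Finset.range N, (T ^ n) x‖
        ≤ (N : ℝ)⁻¹ * ((N : ℝ) * ‖x‖) := by gcongr
      _ = ‖x‖ := by field_simp
  -- density argument
  intro v
  rw [NormedAddCommGroup.tendsto_nhds_zero]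
  intro ε hε
  obtain ⟨y, hy, hdist⟩ := hqi.exists_dist_lt v (half_pos hε)
  have hy0 := hcesideal y hy
  rw [NormedAddCommGroup.tendsto_nhds_zero] at hy0
  filter_upwards [hy0 (ε / 2) (half_pos hε)] with N hN
  have hsplit : (N : ℝ)⁻¹ • ∑ n ∈ Finset.range N, (T ^ n) v =
      ((N : ℝ)⁻¹ • ∑ n ∈ Finset.range N, (T ^ n) (v - y)) +
      ((N : ℝ)⁻¹ • ∑ n ∈ Finset.range N, (T ^ n) y) := by
    rw [← smul_add, ← Finset.sum_add_distrib]
    congr 1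
    apply Finset.sum_congr rfl
    intro n _
    rw [map_sub, sub_add_cancel]
  rw [hsplit]
  calc ‖_ + _‖ ≤ ‖(N : ℝ)⁻¹ • ∑ n ∈ Finset.range N, (T ^ n) (v - y)‖ +
        ‖(N : ℝ)⁻¹ • ∑ n ∈ Finset.range N, (T ^ n) y‖ := norm_add_le _ _
    _ ≤ ‖v - y‖ + ‖(N : ℝ)⁻¹ • ∑ n ∈ Finset.range N, (T ^ n) y‖ := by
        gcongr; exact havg N (v - y)
    _ < ε / 2 + ε / 2 := by
        apply add_lt_add _ hN
        rwa [dist_eq_norm] at hdist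
    _ = ε := add_halves ε
end

section
/- Let A be a resolvent positive operator on an AL space X and B : D(A) → X a positive operator such that α(Au + Bu) ≤ 0 for all u ∈ D(A) ∩ X₊, where α is the positive functional with α(u) = ‖u‖ on X₊. Then for every λ > 0 the operator B R(λ,A) is substochastic, i.e., positive with norm at most 1. -/
/-- In the Kato perturbation setting (`A` resolvent positive on an AL space, `B` positive,
`α(Au + Bu) ≤ 0` on the positive part of the domain), `B R(λ,A)` is substochastic
for every `λ > 0`. -/
theorem stmt_8 {X : Type*} [NormedAddCommGroup X] [Lattice X] [IsOrderedAddMonoid X] [HasSolidNorm X] [NormedSpace ℝ X] [CompleteSpace X]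
    (hadd : ∀ u v : X, 0 ≤ u → 0 ≤ v → ‖u + v‖ = ‖u‖ + ‖v‖)
    (α : X →L[ℝ] ℝ) (hα : ∀ u : X, 0 ≤ u → α u = ‖u‖)
    (p : Submodule ℝ X) (A B : p →ₗ[ℝ] X)
    (hBpos : ∀ u : p, 0 ≤ (u : X) → 0 ≤ B u)
    (hdiss : ∀ u : p, 0 ≤ (u : X) → α (A u + B u) ≤ 0)
    (lam : ℝ) (hlam : 0 < lam)
    (R : X →L[ℝ] X) (hRpos : ∀ f : X, 0 ≤ f → 0 ≤ R f)
    (hmem : ∀ f : X, R f ∈ p)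
    (hleft : ∀ u : p, R (lam • (u : X) - A u) = u)
    (hright : ∀ f : X, lam • (R f) - A ⟨R f, hmem f⟩ = f) :
    (∀ f : X, 0 ≤ f → 0 ≤ B ⟨R f, hmem f⟩) ∧ (∀ f : X, ‖B ⟨R f, hmem f⟩‖ ≤ ‖f‖) := by
  have hpos : ∀ f : X, 0 ≤ f → 0 ≤ B ⟨R f, hmem f⟩ := fun f hf =>
    hBpos _ (hRpos f hf)
  have hposnorm : ∀ f : X, 0 ≤ f → ‖B ⟨R f, hmem f⟩‖ ≤ ‖f‖ := by
    intro f hf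
    set u : p := ⟨R f, hmem f⟩ with hu
    have hRf : 0 ≤ R f := hRpos f hf
    have hBu : 0 ≤ B u := hBpos u hRf
    have hAu : A u = lam • R f - f := by
      have := hright f
      rw [← hu] at this
      linear_combination (norm := module) -this
    have h1 : α (A u) + α (B u) ≤ 0 := by
      have := hdiss u hRf
      rwa [map_add] at this
    have h2 : α (A u) = lam * ‖R f‖ - ‖f‖ := by
      rw [hAu, map_sub, map_smul, hα _ hRf, hα _ hf, smul_eq_mul]
    have h3 : α (B u) = ‖B u‖ := hα _ hBu
    have hRn : 0 ≤ lam * ‖R f‖ := mul_nonneg hlam.le (norm_nonneg _)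
    rw [h2, h3] at h1
    linarith
  refine ⟨hpos, fun f => ?_⟩
  have hdecomp : (⟨R f, hmem f⟩ : p) = ⟨R f⁺, hmem f⁺⟩ - ⟨R f⁻, hmem f⁻⟩ := by
    apply Subtype.ext
    simp only [Submodule.coe_sub]
    rw [← map_sub]
    congr 1
    exact (posPart_sub_negPart f).symm
  rw [hdecomp, map_sub]
  have hp1 : 0 ≤ B ⟨R f⁺, hmem f⁺⟩ := hpos _ (posPart_nonneg f)
  have hp2 : 0 ≤ B ⟨R f⁻, hmem f⁻⟩ := hpos _ (negPart_nonneg f)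
  have habs : |B ⟨R f⁺, hmem f⁺⟩ - B ⟨R f⁻, hmem f⁻⟩| ≤
      B ⟨R f⁺, hmem f⁺⟩ + B ⟨R f⁻, hmem f⁻⟩ := by
    refine abs_le'.2 ⟨?_, ?_⟩
    · have := add_le_add_left (neg_le_self hp2) (B ⟨R f⁺, hmem f⁺⟩)
      simpa [sub_eq_add_neg] using this
    · rw [neg_sub]
      have := add_le_add_right (neg_le_self hp1) (B ⟨R f⁻, hmem f⁻⟩)
      simpa [sub_eq_add_neg, add_comm] using this
  calc ‖B ⟨R f⁺, hmem f⁺⟩ - B ⟨R f⁻, hmem f⁻⟩‖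
      ≤ ‖B ⟨R f⁺, hmem f⁺⟩ + B ⟨R f⁻, hmem f⁻⟩‖ := by
        exact norm_le_norm_of_abs_le_abs
          (habs.trans_eq (abs_of_nonneg (add_nonneg hp1 hp2)).symm)
    _ = ‖B ⟨R f⁺, hmem f⁺⟩‖ + ‖B ⟨R f⁻, hmem f⁻⟩‖ := hadd _ _ hp1 hp2
    _ ≤ ‖f⁺‖ + ‖f⁻‖ := add_le_add (hposnorm _ (posPart_nonneg f)) (hposnorm _ (negPart_nonneg f))
    _ = ‖f⁺ + f⁻‖ := (hadd _ _ (posPart_nonneg f) (negPart_nonneg f)).symm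
    _ = ‖|f|‖ := by rw [posPart_add_negPart]
    _ = ‖f‖ := norm_abs_eq_norm f
end

section
/- Under the assumptions of Kato-type perturbation (A resolvent positive on an AL space X, B : D(A) → X positive, α(Au + Bu) ≤ 0 on D(A)₊), for every λ > 0 the operators I − B R(λ,A) and λI − (A + B) are injective. -/
/-- In the Kato perturbation setting, for every `λ > 0` the operators `I - B R(λ,A)` and
`λ - (A + B)` are injective. -/
theorem stmt_9 {X : Type*} [NormedAddCommGroup X] [Lattice X] [HasSolidNorm X]
    [IsOrderedAddMonoid X] [NormedSpace ℝ X] [CompleteSpace X]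
    (hadd : ∀ u v : X, 0 ≤ u → 0 ≤ v → ‖u + v‖ = ‖u‖ + ‖v‖)
    (α : X →L[ℝ] ℝ) (hα : ∀ u : X, 0 ≤ u → α u = ‖u‖)
    (p : Submodule ℝ X) (A B : p →ₗ[ℝ] X)
    (hBpos : ∀ u : p, 0 ≤ (u : X) → 0 ≤ B u)
    (hdiss : ∀ u : p, 0 ≤ (u : X) → α (A u + B u) ≤ 0)
    (lam : ℝ) (hlam : 0 < lam)
    (R : X →L[ℝ] X) (hRpos : ∀ f : X, 0 ≤ f → 0 ≤ R f)
    (hmem : ∀ f : X, R f ∈ p)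
    (hleft : ∀ u : p, R (lam • (u : X) - A u) = u)
    (hright : ∀ f : X, lam • (R f) - A ⟨R f, hmem f⟩ = f) :
    Function.Injective (fun f : X => f - B ⟨R f, hmem f⟩) ∧
    Function.Injective (fun u : p => lam • (u : X) - (A u + B u)) := by
  -- Key norm estimate: for `g ≥ 0`, `‖B R g‖ + λ ‖R g‖ ≤ ‖g‖`.
  have bound : ∀ g : X, 0 ≤ g → ‖B ⟨R g, hmem g⟩‖ + lam * ‖R g‖ ≤ ‖g‖ := by
    intro g hg
    have hRg : 0 ≤ R g := hRpos g hg
    have hBu : 0 ≤ B ⟨R g, hmem g⟩ := hBpos _ hRg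
    have hd := hdiss ⟨R g, hmem g⟩ hRg
    have hA : A ⟨R g, hmem g⟩ = lam • R g - g :=
      eq_sub_of_add_eq' (sub_eq_iff_eq_add.mp (hright g)).symm
    have hcalc : α (A ⟨R g, hmem g⟩ + B ⟨R g, hmem g⟩)
        = lam * ‖R g‖ - ‖g‖ + ‖B ⟨R g, hmem g⟩‖ := by
      rw [hA, map_add, map_sub, map_smul, hα _ hRg, hα _ hg, hα _ hBu, smul_eq_mul]
    rw [hcalc] at hd
    linarith
  -- monotonicity of R
  have hRmono : ∀ x y : X, x ≤ y → R x ≤ R y := by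
    intro x y hxy
    have := hRpos (y - x) (sub_nonneg.2 hxy)
    rw [map_sub] at this
    exact sub_nonneg.1 this
  -- monotonicity of B
  have hBmono : ∀ (x y : X) (hx : x ∈ p) (hy : y ∈ p), x ≤ y → B ⟨x, hx⟩ ≤ B ⟨y, hy⟩ := by
    intro x y hx hy hxy
    have h0 : (0 : X) ≤ ((⟨y, hy⟩ - ⟨x, hx⟩ : p) : X) := by
      simpa using sub_nonneg.2 hxy
    have := hBpos _ h0
    rw [map_sub] at this
    exact sub_nonneg.1 this
  -- core: fixed points of `B R` are zero
  have key : ∀ h : X, h = B ⟨R h, hmem h⟩ → h = 0 := by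
    intro h hh
    have habs : (0 : X) ≤ |h| := abs_nonneg h
    have h1 : R h ≤ R |h| := hRmono h |h| (le_abs_self h)
    have h2 : -R |h| ≤ R h := by
      have := hRmono (-|h|) h (neg_le.1 (neg_le_abs h))
      rwa [map_neg] at this
    have hb1 : B ⟨R h, hmem h⟩ ≤ B ⟨R |h|, hmem |h|⟩ := hBmono _ _ _ _ h1
    have hb2 : -(B ⟨R |h|, hmem |h|⟩) ≤ B ⟨R h, hmem h⟩ := by
      have hmemneg : -(R |h|) ∈ p := p.neg_mem (hmem |h|)
      have := hBmono (-(R |h|)) (R h) hmemneg (hmem h) h2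
      have heq : (⟨-(R |h|), hmemneg⟩ : p) = -⟨R |h|, hmem |h|⟩ := rfl
      rwa [heq, map_neg] at this
    have hBRabs : (0 : X) ≤ B ⟨R |h|, hmem |h|⟩ := hBpos _ (hRpos _ habs)
    have habsle : |B ⟨R h, hmem h⟩| ≤ |B ⟨R |h|, hmem |h|⟩| := by
      rw [abs_of_nonneg hBRabs]
      exact abs_le'.2 ⟨hb1, neg_le.1 hb2⟩
    have hn1 : ‖B ⟨R h, hmem h⟩‖ ≤ ‖B ⟨R |h|, hmem |h|⟩‖ := norm_le_norm_of_abs_le_abs habsle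
    have hn2 := bound |h| habs
    rw [norm_abs_eq_norm] at hn2
    have hnh : ‖h‖ = ‖B ⟨R h, hmem h⟩‖ := by rw [← hh]
    have hR0 : ‖R |h|‖ ≤ 0 := by nlinarith
    have hRabs0 : R |h| = 0 := by
      have := norm_nonneg (R |h|)
      exact norm_eq_zero.1 (le_antisymm hR0 this)
    have hRh0 : R h = 0 := by
      rw [hRabs0] at h1 h2
      exact le_antisymm h1 (by simpa using h2)
    have : (⟨R h, hmem h⟩ : p) = 0 := Subtype.ext hRh0
    rw [hh, this, map_zero]
  constructor
  · intro f g hfg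
    simp only at hfg
    have hsub : (⟨R (f - g), hmem (f - g)⟩ : p) = ⟨R f, hmem f⟩ - ⟨R g, hmem g⟩ :=
      Subtype.ext (by simp [map_sub])
    have hfix : f - g = B ⟨R (f - g), hmem (f - g)⟩ := by
      rw [hsub, map_sub]
      exact sub_eq_sub_iff_sub_eq_sub.1 hfg
    exact sub_eq_zero.1 (key (f - g) hfix)
  · intro u v huv
    simp only at huv
    set w : p := u - v with hwdef
    have hw : lam • (w : X) - (A w + B w) = 0 := by
      have h1 : lam • (u : X) - (A u + B u) - (lam • (v : X) - (A v + B v)) = 0 :=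
        sub_eq_zero_of_eq huv
      simp only [hwdef, map_sub, Submodule.coe_sub, smul_sub]
      rw [← h1]; abel
    have hf : lam • (w : X) - A w = B w := by
      have : lam • (w : X) - A w - B w = 0 := by rw [← hw]; abel
      exact sub_eq_zero.1 this
    set f : X := lam • (w : X) - A w with hfdef
    have hRf : R f = (w : X) := hleft w
    have hfix : f = B ⟨R f, hmem f⟩ := by
      have heq : (⟨R f, hmem f⟩ : p) = w := Subtype.ext hRf
      rw [heq]; exact hf
    have hf0 := key f hfix
    have hw0 : (w : X) = 0 := by rw [← hRf, hf0, map_zero]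
    have : w = 0 := Subtype.ext hw0
    exact sub_eq_zero.1 this
end

section
/- Let A be resolvent positive on an AL space X and B : D(A) → X positive with α(Au + Bu) ≤ 0 on D(A)₊. For each λ > 0 and each u in the positive cone, the sequence of partial sums Σ_{n=0}^{N} R(λ,A)(B R(λ,A))^n u is nondecreasing in N, bounded in norm by ‖u‖/λ, and hence converges in X. -/
open Filter Topology

/-- In the Kato perturbation setting, for `λ > 0` and `u ≥ 0` the partial sums
`∑_{n=0}^{N} R(λ,A)(B R(λ,A))^n u` are nondecreasing in `N`, norm-bounded by `‖u‖/λ`, and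
converge in `X`. -/
theorem stmt_10 {X : Type*} [NormedAddCommGroup X] [Lattice X] [HasSolidNorm X] [IsOrderedAddMonoid X] [NormedSpace ℝ X] [CompleteSpace X]
    (hadd : ∀ u v : X, 0 ≤ u → 0 ≤ v → ‖u + v‖ = ‖u‖ + ‖v‖)
    (α : X →L[ℝ] ℝ) (hα : ∀ u : X, 0 ≤ u → α u = ‖u‖)
    (p : Submodule ℝ X) (A B : p →ₗ[ℝ] X)
    (hBpos : ∀ u : p, 0 ≤ (u : X) → 0 ≤ B u)
    (hdiss : ∀ u : p, 0 ≤ (u : X) → α (A u + B u) ≤ 0)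
    (lam : ℝ) (hlam : 0 < lam)
    (R : X →L[ℝ] X) (hRpos : ∀ f : X, 0 ≤ f → 0 ≤ R f)
    (hmem : ∀ f : X, R f ∈ p)
    (hleft : ∀ u : p, R (lam • (u : X) - A u) = u)
    (hright : ∀ f : X, lam • (R f) - A ⟨R f, hmem f⟩ = f)
    (K : X →L[ℝ] X) (hK : ∀ f : X, K f = B ⟨R f, hmem f⟩)
    (u : X) (hu : 0 ≤ u) :
    Monotone (fun N : ℕ => ∑ n ∈ Finset.range (N + 1), R ((K ^ n) u)) ∧
    (∀ N : ℕ, ‖∑ n ∈ Finset.range (N + 1), R ((K ^ n) u)‖ ≤ ‖u‖ / lam) ∧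
    (∃ w : X, Tendsto (fun N : ℕ => ∑ n ∈ Finset.range (N + 1), R ((K ^ n) u))
      atTop (𝓝 w)) := by
  set t : ℕ → X := fun n => R ((K ^ n) u) with ht
  set s : ℕ → X := fun N => ∑ n ∈ Finset.range (N + 1), t n with hs
  -- positivity of iterates
  have hKn : ∀ (n : ℕ) (f : X), 0 ≤ f → 0 ≤ (K ^ n) f := by
    intro n
    induction n with
    | zero => intro f hf; simpa using hf
    | succ n ih =>
      intro f hf
      have hKf : 0 ≤ K f := by
        rw [hK]; exact hBpos _ (hRpos f hf)
      have hpow : (K ^ (n + 1)) f = (K ^ n) (K f) := by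
        rw [pow_succ, ContinuousLinearMap.mul_apply]
      rw [hpow]; exact ih _ hKf
  have htpos : ∀ n, 0 ≤ t n := fun n => hRpos _ (hKn n u hu)
  have hspos : ∀ N, 0 ≤ s N := fun N => Finset.sum_nonneg fun n _ => htpos n
  -- key dissipativity estimate
  have hkey : ∀ f : X, 0 ≤ f → lam * ‖R f‖ + ‖K f‖ ≤ ‖f‖ := by
    intro f hf
    have hKf : 0 ≤ K f := by rw [hK]; exact hBpos _ (hRpos f hf)
    have hA : (A ⟨R f, hmem f⟩ : X) = lam • R f - f := by
      have h := hright f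
      rw [sub_eq_iff_eq_add] at h
      rw [h]; abel
    have hd := hdiss ⟨R f, hmem f⟩ (hRpos f hf)
    rw [hA, ← hK] at hd
    have hval : α (lam • R f - f + K f) = lam * ‖R f‖ - ‖f‖ + ‖K f‖ := by
      rw [map_add, map_sub, map_smul, smul_eq_mul,
        hα _ (hRpos f hf), hα _ hf, hα _ hKf]
    rw [hval] at hd
    linarith
  -- additivity of norm on sums
  have hnormsum : ∀ N : ℕ, ‖∑ n ∈ Finset.range N, t n‖ = ∑ n ∈ Finset.range N, ‖t n‖ := by
    intro N
    induction N with
    | zero => simp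
    | succ N ih =>
      rw [Finset.sum_range_succ, Finset.sum_range_succ,
        hadd _ _ (Finset.sum_nonneg fun n _ => htpos n) (htpos N), ih]
  -- norm bound
  have hbound : ∀ N : ℕ, ‖s N‖ ≤ ‖u‖ / lam := by
    intro N
    rw [le_div_iff₀ hlam, hs]
    simp only
    rw [hnormsum, Finset.sum_mul]
    have step : ∀ n : ℕ, ‖t n‖ * lam ≤ ‖(K ^ n) u‖ - ‖(K ^ (n + 1)) u‖ := by
      intro n
      have h := hkey ((K ^ n) u) (hKn n u hu)
      have hpow : (K ^ (n + 1)) u = K ((K ^ n) u) := by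
        rw [pow_succ', ContinuousLinearMap.mul_apply]
      rw [hpow]
      have : ‖t n‖ = ‖R ((K ^ n) u)‖ := rfl
      rw [this]
      linarith
    calc ∑ n ∈ Finset.range (N + 1), ‖t n‖ * lam
        ≤ ∑ n ∈ Finset.range (N + 1), (‖(K ^ n) u‖ - ‖(K ^ (n + 1)) u‖) :=
          Finset.sum_le_sum fun n _ => step n
      _ = ‖(K ^ 0) u‖ - ‖(K ^ (N + 1)) u‖ := Finset.sum_range_sub' _ _
      _ ≤ ‖u‖ := by simp [sub_le_self_iff, norm_nonneg]
  -- monotonicity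
  have hmono : Monotone s := by
    apply monotone_nat_of_le_succ
    intro N
    have : s (N + 1) = s N + t (N + 1) := by
      rw [hs]; simp only; rw [Finset.sum_range_succ]
    rw [this]
    exact le_add_of_nonneg_right (htpos _)
  refine ⟨hmono, hbound, ?_⟩
  -- convergence: s is Cauchy
  have hdiff : ∀ {N M : ℕ}, N ≤ M → ‖s M‖ = ‖s N‖ + ‖s M - s N‖ := by
    intro N M hNM
    have hd : s M - s N = ∑ n ∈ Finset.Ico (N + 1) (M + 1), t n := by
      rw [hs]; simp only
      rw [← Finset.sum_range_add_sum_Ico t (Nat.succ_le_succ hNM)]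
      abel
    have hdpos : 0 ≤ s M - s N := by
      rw [hd]; exact Finset.sum_nonneg fun n _ => htpos n
    have heq : ‖s M‖ = ‖s N + (s M - s N)‖ := by congr 1; abel
    rw [heq, hadd _ _ (hspos N) hdpos]
  set a : ℕ → ℝ := fun N => ‖s N‖ with ha
  have hamono : Monotone a := by
    intro N M hNM
    have := hdiff hNM
    simp only [ha]
    rw [this]
    exact le_add_of_nonneg_right (norm_nonneg _)
  have habdd : BddAbove (Set.range a) := ⟨‖u‖ / lam, by rintro x ⟨N, rfl⟩; exact hbound N⟩
  have hacauchy : CauchySeq a := (tendsto_atTop_ciSup hamono habdd).cauchySeq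
  have hscauchy : CauchySeq s := by
    rw [Metric.cauchySeq_iff] at hacauchy ⊢
    intro ε hε
    obtain ⟨N0, hN0⟩ := hacauchy ε hε
    refine ⟨N0, fun m hm n hn => ?_⟩
    rcases le_total n m with h | h
    · have : dist (s m) (s n) = a m - a n := by
        rw [dist_eq_norm, ha]
        simp only
        have h2 := hdiff h
        linarith [h2]
      rw [this]
      have := hN0 m hm n hn
      rw [Real.dist_eq] at this
      calc a m - a n ≤ |a m - a n| := le_abs_self _
        _ < ε := this
    · have : dist (s m) (s n) = a n - a m := by
        rw [dist_comm, dist_eq_norm, ha]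
        simp only
        have h2 := hdiff h
        linarith [h2]
      rw [this]
      have := hN0 n hn m hm
      rw [Real.dist_eq] at this
      calc a n - a m ≤ |a n - a m| := le_abs_self _
        _ < ε := this
  exact cauchySeq_tendsto_of_complete hscauchy
end

section
/- Let A be resolvent positive on an AL space, B positive on D(A) with α(Au + Bu) = 0 on D(A)₊. Then for every λ > 0, u ∈ X₊ and N ∈ ℕ: λ‖R(λ,A) Σ_{n=0}^{N}(B R(λ,A))^n u‖ = ‖u‖ − ‖(B R(λ,A))^{N+1} u‖. -/
/-- In the conservative Kato setting, for every `λ > 0`, `u ≥ 0` and `N`: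
`λ‖R(λ,A) ∑_{n=0}^{N}(B R(λ,A))^n u‖ = ‖u‖ - ‖(B R(λ,A))^{N+1} u‖`. -/
theorem stmt_12 {X : Type*} [NormedAddCommGroup X] [Lattice X] [HasSolidNorm X] [IsOrderedAddMonoid X] [NormedSpace ℝ X] [CompleteSpace X]
    (hadd : ∀ u v : X, 0 ≤ u → 0 ≤ v → ‖u + v‖ = ‖u‖ + ‖v‖)
    (α : X →L[ℝ] ℝ) (hα : ∀ u : X, 0 ≤ u → α u = ‖u‖)
    (p : Submodule ℝ X) (A B : p →ₗ[ℝ] X)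
    (hBpos : ∀ u : p, 0 ≤ (u : X) → 0 ≤ B u)
    (hcons : ∀ u : p, 0 ≤ (u : X) → α (A u + B u) = 0)
    (lam : ℝ) (hlam : 0 < lam)
    (R : X →L[ℝ] X) (hRpos : ∀ f : X, 0 ≤ f → 0 ≤ R f)
    (hmem : ∀ f : X, R f ∈ p)
    (hleft : ∀ u : p, R (lam • (u : X) - A u) = u)
    (hright : ∀ f : X, lam • (R f) - A ⟨R f, hmem f⟩ = f)
    (K : X →L[ℝ] X) (hK : ∀ f : X, K f = B ⟨R f, hmem f⟩) :
    ∀ u : X, 0 ≤ u → ∀ N : ℕ,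
      lam * ‖R (∑ n ∈ Finset.range (N + 1), (K ^ n) u)‖ = ‖u‖ - ‖(K ^ (N + 1)) u‖ := by
  -- K preserves positivity
  have hKpos : ∀ f : X, 0 ≤ f → 0 ≤ K f := by
    intro f hf
    rw [hK]
    exact hBpos _ (hRpos f hf)
  -- key identity: for v ≥ 0, lam * ‖R v‖ = ‖v‖ - ‖K v‖
  have key : ∀ v : X, 0 ≤ v → lam * ‖R v‖ = ‖v‖ - ‖K v‖ := by
    intro v hv
    have hRv : 0 ≤ R v := hRpos v hv
    have h := hcons ⟨R v, hmem v⟩ hRv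
    have hA : A ⟨R v, hmem v⟩ = lam • R v - v := by
      have := hright v
      linear_combination (norm := abel_nf) -this
    rw [hA, ← hK] at h
    have hexp : α (lam • R v - v + K v) = lam * α (R v) - α v + α (K v) := by
      simp [map_add, map_sub, map_smul, smul_eq_mul]
    rw [hexp] at h
    rw [hα _ hRv, hα _ hv, hα _ (hKpos v hv)] at h
    linarith
  intro u hu N
  -- positivity of K^n u
  have hKn : ∀ n : ℕ, 0 ≤ (K ^ n) u := by
    intro n
    induction n with
    | zero => simpa using hu
    | succ n ih => rw [pow_succ']; exact hKpos _ ih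
  induction N with
  | zero =>
    simpa using key u hu
  | succ N ih =>
    have hsum : ∑ n ∈ Finset.range (N + 2), (K ^ n) u
        = (∑ n ∈ Finset.range (N + 1), (K ^ n) u) + (K ^ (N + 1)) u := by
      rw [Finset.sum_range_succ]
    have hsumpos : 0 ≤ ∑ n ∈ Finset.range (N + 1), (K ^ n) u :=
      Finset.sum_nonneg fun n _ => hKn n
    have hRsum : 0 ≤ R (∑ n ∈ Finset.range (N + 1), (K ^ n) u) := hRpos _ hsumpos
    have hRK : 0 ≤ R ((K ^ (N + 1)) u) := hRpos _ (hKn (N + 1))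
    have step := key ((K ^ (N + 1)) u) (hKn (N + 1))
    have hKNsucc : K ((K ^ (N + 1)) u) = (K ^ (N + 2)) u := by
      simp [pow_succ', ContinuousLinearMap.mul_apply]
    rw [hKNsucc] at step
    rw [hsum, map_add, hadd _ _ hRsum hRK, mul_add, ih]
    linarith
end

section
/- Let T_λ (λ > 0) be a family of positive operators on an AL space X that is nondecreasing as λ decreases (T_λ ≤ T_μ for μ ≤ λ) with ‖T_λ‖ ≤ 1 for all λ. Then for every u ∈ X the limit K u = lim_{λ↓0} T_λ u exists and defines a substochastic operator K on X. -/
open Filter Topology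

/-- A family of positive contractions `T λ` on an AL space which is nondecreasing as `λ`
decreases admits a strong limit `K u = lim_{λ↓0} T λ u`, and `K` is substochastic. -/
theorem stmt_13 {X : Type*} [NormedAddCommGroup X] [Lattice X] [HasSolidNorm X] [IsOrderedAddMonoid X] [NormedSpace ℝ X] [CompleteSpace X]
    (hadd : ∀ u v : X, 0 ≤ u → 0 ≤ v → ‖u + v‖ = ‖u‖ + ‖v‖)
    (T : ℝ → X →L[ℝ] X)
    (hpos : ∀ lam : ℝ, 0 < lam → ∀ u : X, 0 ≤ u → 0 ≤ T lam u)
    (hnorm : ∀ lam : ℝ, 0 < lam → ‖T lam‖ ≤ 1)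
    (hmono : ∀ lam mu : ℝ, 0 < lam → lam ≤ mu → ∀ u : X, 0 ≤ u → T mu u ≤ T lam u) :
    ∃ K : X →L[ℝ] X, (∀ u : X, 0 ≤ u → 0 ≤ K u) ∧ ‖K‖ ≤ 1 ∧
      ∀ u : X, Tendsto (fun lam : ℝ => T lam u) (𝓝[>] (0 : ℝ)) (𝓝 (K u)) := by
  classical
  have hbound : ∀ lam : ℝ, 0 < lam → ∀ u : X, ‖T lam u‖ ≤ ‖u‖ := by
    intro lam hl u
    calc ‖T lam u‖ ≤ ‖T lam‖ * ‖u‖ := (T lam).le_opNorm u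
      _ ≤ 1 * ‖u‖ := mul_le_mul_of_nonneg_right (hnorm lam hl) (norm_nonneg u)
      _ = ‖u‖ := one_mul _
  -- norm difference of ordered positive elements
  have hdiff : ∀ a b : X, 0 ≤ a → a ≤ b → ‖b - a‖ = ‖b‖ - ‖a‖ := by
    intro a b ha hab
    have h1 : 0 ≤ b - a := sub_nonneg.mpr hab
    have := hadd (b - a) a h1 ha
    rw [sub_add_cancel] at this
    linarith
  have hcau : ∀ u : X, 0 ≤ u →
      Cauchy (Filter.map (fun lam => T lam u) (𝓝[>] (0 : ℝ))) := by
    intro u hu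
    set f : ℝ → ℝ := fun lam => ‖T lam u‖ with hf
    have hne : (f '' Set.Ioi (0 : ℝ)).Nonempty := ⟨f 1, 1, by norm_num, rfl⟩
    have hbdd : BddAbove (f '' Set.Ioi (0 : ℝ)) := by
      refine ⟨‖u‖, ?_⟩
      rintro _ ⟨lam, hl, rfl⟩
      exact hbound lam hl u
    set L := sSup (f '' Set.Ioi (0 : ℝ)) with hL
    rw [Metric.cauchy_iff]
    refine ⟨Filter.map_neBot, ?_⟩
    intro ε hε
    obtain ⟨_, ⟨lam0, hl0, rfl⟩, hy⟩ :=
      exists_lt_of_lt_csSup hne (show L - ε < L by linarith)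
    refine ⟨(fun lam => T lam u) '' Set.Ioo 0 lam0,
      Filter.image_mem_map (Ioo_mem_nhdsGT_of_mem ⟨le_refl _, hl0⟩), ?_⟩
    have key : ∀ lam mu : ℝ, lam ∈ Set.Ioo (0:ℝ) lam0 → mu ∈ Set.Ioo (0:ℝ) lam0 →
        lam ≤ mu → dist (T lam u) (T mu u) < ε := by
      intro lam mu hlam hmu hle
      have h1 : T mu u ≤ T lam u := hmono lam mu hlam.1 hle u hu
      have h2 : 0 ≤ T mu u := hpos mu hmu.1 u hu
      rw [dist_eq_norm, hdiff _ _ h2 h1]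
      have h3 : f lam ≤ L := le_csSup hbdd ⟨lam, hlam.1, rfl⟩
      have h4 : f lam0 ≤ f mu := by
        have := hdiff _ _ (hpos lam0 (hmu.1.trans hmu.2) u hu)
          (hmono mu lam0 hmu.1 hmu.2.le u hu)
        have h5 := norm_nonneg (T mu u - T lam0 u)
        simp only [hf] at *
        linarith
      simp only [hf] at *
      linarith
    rintro _ ⟨lam, hlam, rfl⟩ _ ⟨mu, hmu, rfl⟩
    rcases le_total lam mu with h | h
    · exact key lam mu hlam hmu h
    · rw [dist_comm]; exact key mu lam hmu hlam h
  have hlim : ∀ u : X, ∃ v : X, Tendsto (fun lam => T lam u) (𝓝[>] (0 : ℝ)) (𝓝 v) := by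
    intro u
    obtain ⟨vp, hvp⟩ := CompleteSpace.complete (hcau u⁺ (posPart_nonneg u))
    obtain ⟨vn, hvn⟩ := CompleteSpace.complete (hcau u⁻ (negPart_nonneg u))
    have hvp' : Tendsto (fun lam => T lam u⁺) (𝓝[>] (0 : ℝ)) (𝓝 vp) := hvp
    have hvn' : Tendsto (fun lam => T lam u⁻) (𝓝[>] (0 : ℝ)) (𝓝 vn) := hvn
    refine ⟨vp - vn, ?_⟩
    have h := hvp'.sub hvn'
    have heq : (fun lam => T lam u⁺ - T lam u⁻) = fun lam => T lam u := by
      funext lam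
      rw [← map_sub, posPart_sub_negPart]
    rwa [heq] at h
  choose Klim hKlim using hlim
  have haddK : ∀ u v : X, Klim (u + v) = Klim u + Klim v := by
    intro u v
    refine tendsto_nhds_unique ?_ ((hKlim u).add (hKlim v))
    simpa [map_add] using hKlim (u + v)
  have hsmulK : ∀ (c : ℝ) (u : X), Klim (c • u) = c • Klim u := by
    intro c u
    refine tendsto_nhds_unique ?_ ((hKlim u).const_smul c)
    simpa [map_smul] using hKlim (c • u)
  let Kl : X →ₗ[ℝ] X := ⟨⟨Klim, haddK⟩, hsmulK⟩
  have hKn : ∀ u : X, ‖Kl u‖ ≤ 1 * ‖u‖ := by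
    intro u
    rw [one_mul]
    refine le_of_tendsto ((hKlim u).norm) ?_
    filter_upwards [self_mem_nhdsWithin] with lam hl
    exact hbound lam hl u
  refine ⟨LinearMap.mkContinuous Kl 1 hKn, ?_,
    LinearMap.mkContinuous_norm_le _ zero_le_one _, fun u => hKlim u⟩
  intro u hu
  refine ge_of_tendsto (hKlim u) ?_
  filter_upwards [self_mem_nhdsWithin] with lam hl
  exact hpos lam hl u hu
end

section
/- Let K and T be substochastic operators on an AL space X with 0 ≤ T ≤ K (i.e., T u ≤ K u for all u ≥ 0). If K is mean ergodic (Cesàro averages of K converge for every element) and Ker(I − T) = {0}, then lim_{N→∞} (1/N) Σ_{n=0}^{N−1} T^n u = 0 for every u ∈ X₊. -/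
open Filter Topology

lemma aux_norm_sum {X : Type*} [NormedAddCommGroup X] [Lattice X] [HasSolidNorm X]
    [IsOrderedAddMonoid X]
    (hadd : ∀ u v : X, 0 ≤ u → 0 ≤ v → ‖u + v‖ = ‖u‖ + ‖v‖)
    (f : ℕ → X) (hf : ∀ i, 0 ≤ f i) (N : ℕ) :
    ‖∑ i ∈ Finset.range N, f i‖ = ∑ i ∈ Finset.range N, ‖f i‖ := by
  induction N with
  | zero => simp
  | succ n ih =>
    rw [Finset.sum_range_succ, Finset.sum_range_succ, ← ih,
      hadd _ _ (Finset.sum_nonneg fun i _ => hf i) (hf n)]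


lemma aux_smul_nonneg_s14 {X : Type*} [NormedAddCommGroup X] [Lattice X] [HasSolidNorm X]
    [IsOrderedAddMonoid X] [NormedSpace ℝ X]
    {r : ℝ} {x : X} (hr : 0 ≤ r) (hx : 0 ≤ x) : 0 ≤ r • x := by
  have hclosed : IsClosed {y : X | (0 : X) ≤ y} := isClosed_le continuous_const continuous_id
  have h2k : ∀ (k : ℕ) (y : X), 0 ≤ (2 ^ k) • y → 0 ≤ y := by
    intro k
    induction k with
    | zero => intro y hy; simpa using hy
    | succ k ih =>
      intro y hy
      rw [pow_succ, ← smul_smul] at hy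
      exact nsmul_two_semiclosed (ih _ hy)
  have hdy : ∀ k : ℕ, 0 ≤ ((2 : ℝ) ^ k)⁻¹ • x := by
    intro k
    apply h2k k
    rw [← Nat.cast_smul_eq_nsmul ℝ, smul_smul]
    have : ((2 ^ k : ℕ) : ℝ) * ((2 : ℝ) ^ k)⁻¹ = 1 := by
      push_cast
      field_simp
    rw [this, one_smul]
    exact hx
  have hq : ∀ (m k : ℕ), 0 ≤ ((m : ℝ) * ((2 : ℝ) ^ k)⁻¹) • x := by
    intro m k
    rw [mul_smul, Nat.cast_smul_eq_nsmul ℝ]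
    exact nsmul_nonneg (hdy k) m
  have hc : Tendsto (fun j : ℕ => ((⌊r * 2 ^ j⌋₊ : ℝ) * ((2 : ℝ) ^ j)⁻¹)) atTop (𝓝 r) := by
    rw [← tendsto_sub_nhds_zero_iff]
    apply squeeze_zero_norm (a := fun j : ℕ => ((2 : ℝ) ^ j)⁻¹)
    · intro j
      have h2pos : (0 : ℝ) < 2 ^ j := by positivity
      have hfl : (⌊r * 2 ^ j⌋₊ : ℝ) ≤ r * 2 ^ j := Nat.floor_le (by positivity)
      have hfl2 : r * 2 ^ j < (⌊r * 2 ^ j⌋₊ : ℝ) + 1 := Nat.lt_floor_add_one _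
      rw [Real.norm_eq_abs, abs_le]
      constructor
      · have key : r - ((2:ℝ)^j)⁻¹ ≤ (⌊r * 2 ^ j⌋₊ : ℝ) * ((2:ℝ)^j)⁻¹ := by
          have h1 : (r * 2 ^ j - 1) * ((2:ℝ)^j)⁻¹ ≤ (⌊r * 2 ^ j⌋₊ : ℝ) * ((2:ℝ)^j)⁻¹ :=
            mul_le_mul_of_nonneg_right (by linarith) (by positivity)
          calc r - ((2:ℝ)^j)⁻¹ = (r * 2 ^ j - 1) * ((2:ℝ)^j)⁻¹ := by field_simp
            _ ≤ _ := h1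
        linarith
      · have : (⌊r * 2 ^ j⌋₊ : ℝ) * ((2:ℝ)^j)⁻¹ ≤ r := by
          calc (⌊r * 2 ^ j⌋₊ : ℝ) * ((2:ℝ)^j)⁻¹ ≤ (r * 2 ^ j) * ((2:ℝ)^j)⁻¹ :=
              mul_le_mul_of_nonneg_right hfl (by positivity)
            _ = r := by field_simp
        have hinv : (0:ℝ) ≤ ((2:ℝ)^j)⁻¹ := by positivity
        linarith
    · have : Tendsto (fun j : ℕ => ((1:ℝ)/2) ^ j) atTop (𝓝 0) :=
        tendsto_pow_atTop_nhds_zero_of_lt_one (by norm_num) (by norm_num)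
      simpa [one_div, inv_pow] using this
  have hlim : Tendsto (fun j : ℕ => ((⌊r * 2 ^ j⌋₊ : ℝ) * ((2 : ℝ) ^ j)⁻¹) • x) atTop
      (𝓝 (r • x)) := hc.smul_const x
  exact hclosed.mem_of_tendsto hlim (Eventually.of_forall fun j => hq _ j)

/-- If `K` is a mean ergodic substochastic operator dominating a substochastic operator `T`
with trivial fixed space of `I - T`, then the Cesàro averages of `T` tend to `0` on the
positive cone. -/
theorem stmt_14 {X : Type*} [NormedAddCommGroup X] [Lattice X] [HasSolidNorm X]
    [IsOrderedAddMonoid X] [NormedSpace ℝ X] [CompleteSpace X]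
    (hadd : ∀ u v : X, 0 ≤ u → 0 ≤ v → ‖u + v‖ = ‖u‖ + ‖v‖)
    (K T : X →L[ℝ] X)
    (hKpos : ∀ u : X, 0 ≤ u → 0 ≤ K u) (hKnorm : ‖K‖ ≤ 1)
    (hTpos : ∀ u : X, 0 ≤ u → 0 ≤ T u) (hTnorm : ‖T‖ ≤ 1)
    (hdom : ∀ u : X, 0 ≤ u → T u ≤ K u)
    (hKerg : ∀ u : X, ∃ w : X,
      Tendsto (fun N : ℕ => (N : ℝ)⁻¹ • ∑ n ∈ Finset.range N, (K ^ n) u) atTop (𝓝 w))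
    (hker : ∀ u : X, T u = u → u = 0) :
    ∀ u : X, 0 ≤ u →
      Tendsto (fun N : ℕ => (N : ℝ)⁻¹ • ∑ n ∈ Finset.range N, (T ^ n) u) atTop (𝓝 0) := by
  -- basic contraction facts
  have hTc : ∀ x : X, ‖T x‖ ≤ ‖x‖ := fun x =>
    (T.le_opNorm x).trans (by nlinarith [norm_nonneg x])
  -- monotonicity of positive operators
  have hmono : ∀ (S : X →L[ℝ] X), (∀ x : X, 0 ≤ x → 0 ≤ S x) →
      ∀ {v v' : X}, v ≤ v' → S v ≤ S v' := by
    intro S hS v v' h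
    have := hS _ (sub_nonneg.2 h)
    rw [map_sub] at this
    exact sub_nonneg.1 this
  -- positivity of powers
  have hTpow : ∀ (n : ℕ) (x : X), 0 ≤ x → 0 ≤ (T ^ n) x := by
    intro n
    induction n with
    | zero => intro x hx; simpa using hx
    | succ n ih =>
      intro x hx
      rw [pow_succ, ContinuousLinearMap.mul_apply]
      exact ih _ (hTpos _ hx)
  have hKpow : ∀ (n : ℕ) (x : X), 0 ≤ x → 0 ≤ (K ^ n) x := by
    intro n
    induction n with
    | zero => intro x hx; simpa using hx
    | succ n ih =>
      intro x hx
      rw [pow_succ, ContinuousLinearMap.mul_apply]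
      exact ih _ (hKpos _ hx)
  -- the closed positive cone
  have hclosed : IsClosed {x : X | (0 : X) ≤ x} := isClosed_le continuous_const continuous_id
  -- norm is monotone on positives
  have hnmono : ∀ {a b : X}, 0 ≤ a → a ≤ b → ‖a‖ ≤ ‖b‖ := by
    intro a b ha hab
    exact norm_le_norm_of_abs_le_abs (by rwa [abs_of_nonneg ha, abs_of_nonneg (ha.trans hab)])
  intro u hu
  -- domination of powers
  have hdomn : ∀ n : ℕ, (T ^ n) u ≤ (K ^ n) u := by
    intro n
    induction n with
    | zero => simp
    | succ n ih =>
      rw [pow_succ', pow_succ', ContinuousLinearMap.mul_apply, ContinuousLinearMap.mul_apply]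
      exact le_trans (hmono T hTpos ih) (hdom _ (hKpow n u hu))
  -- the fixed point w of K
  obtain ⟨w, hw⟩ := hKerg u
  set A := fun N : ℕ => (N : ℝ)⁻¹ • ∑ n ∈ Finset.range N, (K ^ n) u with hA
  have hAnn : ∀ N, 0 ≤ A N := by
    intro N
    exact aux_smul_nonneg_s14 (by positivity) (Finset.sum_nonneg fun n _ => hKpow n u hu)
  have hwpos : 0 ≤ w := hclosed.mem_of_tendsto hw (Eventually.of_forall hAnn)
  -- K w = w
  have hKA : ∀ N : ℕ, K (A N) = A N + (N : ℝ)⁻¹ • ((K ^ N) u - u) := by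
    intro N
    have h1 : ∀ n : ℕ, K ((K ^ n) u) = (K ^ (n + 1)) u := by
      intro n
      rw [pow_succ', ContinuousLinearMap.mul_apply]
    rw [hA]
    simp only [map_smul, map_sum]
    rw [← smul_add]
    congr 1
    simp only [h1]
    have h2 : ∑ n ∈ Finset.range (N + 1), (K ^ n) u
        = ∑ n ∈ Finset.range N, (K ^ (n + 1)) u + (K ^ 0) u := Finset.sum_range_succ' _ N
    have h3 : ∑ n ∈ Finset.range (N + 1), (K ^ n) u
        = ∑ n ∈ Finset.range N, (K ^ n) u + (K ^ N) u := Finset.sum_range_succ _ N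
    rw [h3] at h2
    simp only [pow_zero, ContinuousLinearMap.one_apply] at h2
    calc ∑ n ∈ Finset.range N, (K ^ (n + 1)) u
        = ∑ n ∈ Finset.range N, (K ^ n) u + (K ^ N) u - u := eq_sub_of_add_eq h2.symm
      _ = ∑ n ∈ Finset.range N, (K ^ n) u + ((K ^ N) u - u) := add_sub_assoc _ _ _
  have hKAtend : Tendsto (fun N => K (A N)) atTop (𝓝 w) := by
    simp only [hKA]
    rw [show (𝓝 w) = 𝓝 (w + 0) by rw [add_zero]]
    apply hw.add
    have hB : Tendsto (fun N : ℕ => (N : ℝ)⁻¹ * (2 * ‖u‖)) atTop (𝓝 0) := by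
      simpa using (tendsto_inv_atTop_nhds_zero_nat).mul_const (2 * ‖u‖)
    apply squeeze_zero_norm _ hB
    intro N
    rw [norm_smul]
    have hKc : ∀ x : X, ‖K x‖ ≤ ‖x‖ := fun x =>
      (K.le_opNorm x).trans (by nlinarith [norm_nonneg x])
    have hKN : ∀ (n : ℕ) (x : X), ‖(K ^ n) x‖ ≤ ‖x‖ := by
      intro n
      induction n with
      | zero => intro x; simp
      | succ n ih =>
        intro x
        rw [pow_succ, ContinuousLinearMap.mul_apply]
        exact (ih _).trans (hKc x)
    have : ‖(K ^ N) u - u‖ ≤ 2 * ‖u‖ := by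
      have := hKN N u
      calc ‖(K ^ N) u - u‖ ≤ ‖(K ^ N) u‖ + ‖u‖ := norm_sub_le _ _
        _ ≤ 2 * ‖u‖ := by linarith
    rw [Real.norm_eq_abs, abs_of_nonneg (by positivity : (0:ℝ) ≤ (N:ℝ)⁻¹)]
    exact mul_le_mul_of_nonneg_left this (by positivity)
  have hKw : K w = w := tendsto_nhds_unique (((K.continuous.tendsto w).comp hw)) hKAtend
  -- T w ≤ w
  have hTw : T w ≤ w := (hdom w hwpos).trans (le_of_eq hKw)
  -- the sequence b n = T^n w is decreasing and nonneg
  set b := fun n : ℕ => (T ^ n) w with hb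
  have hbsucc : ∀ n, b (n + 1) = (T ^ n) (T w) := by
    intro n; rw [hb]; simp only [pow_succ, ContinuousLinearMap.mul_apply]
  have hbnn : ∀ n, 0 ≤ b n := fun n => hTpow n w hwpos
  have hbdec : ∀ n, b (n + 1) ≤ b n := by
    intro n
    rw [hbsucc n]
    exact hmono (T ^ n) (hTpow n) hTw
  set a := fun n : ℕ => ‖b n‖ with ha
  have hadec : ∀ n, a (n + 1) ≤ a n := fun n => hnmono (hbnn (n + 1)) (hbdec n)
  have haanti : Antitone a := antitone_nat_of_succ_le hadec
  have habdd : BddBelow (Set.range a) := ⟨0, fun x ⟨n, hn⟩ => hn ▸ norm_nonneg _⟩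
  have hatend : Tendsto a atTop (𝓝 (⨅ n, a n)) := tendsto_atTop_ciInf haanti habdd
  have hbanti : Antitone b := antitone_nat_of_succ_le hbdec
  -- b is Cauchy
  have hdistab : ∀ n m : ℕ, n ≤ m → dist (b n) (b m) = dist (a n) (a m) := by
    intro n m hnm
    have hle : b m ≤ b n := hbanti hnm
    have h0 : 0 ≤ b n - b m := sub_nonneg.2 hle
    have := hadd (b n - b m) (b m) h0 (hbnn m)
    rw [sub_add_cancel] at this
    have h1 : ‖b n - b m‖ = a n - a m := by simp only [ha]; linarith
    rw [dist_eq_norm, dist_eq_norm, h1, Real.norm_eq_abs,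
      abs_of_nonneg (by linarith [hnmono (hbnn m) hle] : (0:ℝ) ≤ a n - a m)]
  have haC : CauchySeq a := hatend.cauchySeq
  have hbC : CauchySeq b := by
    rw [Metric.cauchySeq_iff]
    intro ε hε
    obtain ⟨M, hM⟩ := Metric.cauchySeq_iff.1 haC ε hε
    refine ⟨M, fun n hn m hm => ?_⟩
    rcases le_total m n with h | h
    · rw [dist_comm, hdistab m n h, dist_comm]; exact hM n hn m hm
    · rw [hdistab n m h]; exact hM n hn m hm
  obtain ⟨z, hz⟩ := cauchySeq_tendsto_of_complete hbC
  have hbTz : ∀ n, b (n + 1) = T (b n) := by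
    intro n; rw [hb]; simp only [pow_succ', ContinuousLinearMap.mul_apply]
  have hTz : T z = z := by
    have h1 : Tendsto (fun n => b (n + 1)) atTop (𝓝 z) := hz.comp (tendsto_add_atTop_nat 1)
    have h2 : Tendsto (fun n => T (b n)) atTop (𝓝 (T z)) := (T.continuous.tendsto z).comp hz
    simp only [hbTz] at h1
    exact tendsto_nhds_unique h2 h1
  have hz0 : z = 0 := hker z hTz
  have hatend0 : Tendsto a atTop (𝓝 0) := by
    have : Tendsto (fun n => ‖b n‖) atTop (𝓝 ‖z‖) := (continuous_norm.tendsto z).comp hz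
    rwa [hz0, norm_zero] at this
  -- the infimum c of ‖T^n u‖
  set t := fun n : ℕ => ‖(T ^ n) u‖ with ht
  have htdec : ∀ n, t (n + 1) ≤ t n := by
    intro n
    rw [ht]
    simp only [pow_succ', ContinuousLinearMap.mul_apply]
    exact hTc _
  have htanti : Antitone t := antitone_nat_of_succ_le htdec
  have htbdd : BddBelow (Set.range t) := ⟨0, fun x ⟨n, hn⟩ => hn ▸ norm_nonneg _⟩
  set c := ⨅ n, t n with hc
  have httend : Tendsto t atTop (𝓝 c) := tendsto_atTop_ciInf htanti htbdd
  have hcnn : 0 ≤ c := le_ciInf fun n => norm_nonneg _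
  -- c ≤ ‖T^m w‖ for every m
  have hcle : ∀ m : ℕ, c ≤ a m := by
    intro m
    have hstep : ∀ N : ℕ, 1 ≤ N → c ≤ ‖(T ^ m) (A N)‖ := by
      intro N hN
      have h1 : ∀ n : ℕ, c ≤ ‖(T ^ m) ((K ^ n) u)‖ := by
        intro n
        have hc1 : c ≤ t (m + n) := ciInf_le htbdd (m + n)
        have h2 : (T ^ (m + n)) u = (T ^ m) ((T ^ n) u) := by
          rw [pow_add, ContinuousLinearMap.mul_apply]
        have h3 : (T ^ m) ((T ^ n) u) ≤ (T ^ m) ((K ^ n) u) :=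
          hmono (T ^ m) (hTpow m) (hdomn n)
        have h4 : 0 ≤ (T ^ m) ((T ^ n) u) := hTpow m _ (hTpow n u hu)
        calc c ≤ t (m + n) := hc1
          _ = ‖(T ^ m) ((T ^ n) u)‖ := by rw [ht]; simp only [h2]
          _ ≤ ‖(T ^ m) ((K ^ n) u)‖ := hnmono h4 h3
      have hsum : (N : ℝ) * c ≤ ‖(T ^ m) (∑ n ∈ Finset.range N, (K ^ n) u)‖ := by
        have := Finset.sum_le_sum (fun n (_ : n ∈ Finset.range N) => h1 n)
        rw [Finset.sum_const, Finset.card_range, nsmul_eq_mul] at this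
        calc (N : ℝ) * c ≤ ∑ n ∈ Finset.range N, ‖(T ^ m) ((K ^ n) u)‖ := this
          _ = ‖∑ n ∈ Finset.range N, (T ^ m) ((K ^ n) u)‖ :=
              (aux_norm_sum hadd _ (fun n => hTpow m _ (hKpow n u hu)) N).symm
          _ = ‖(T ^ m) (∑ n ∈ Finset.range N, (K ^ n) u)‖ := by rw [map_sum]
      have hNpos : (0 : ℝ) < N := by exact_mod_cast hN
      rw [hA]
      simp only [map_smul, norm_smul, Real.norm_eq_abs,
        abs_of_nonneg (by positivity : (0:ℝ) ≤ (N:ℝ)⁻¹)]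
      rw [inv_mul_eq_div, le_div_iff₀ hNpos]
      linarith
    have htm : Tendsto (fun N => ‖(T ^ m) (A N)‖) atTop (𝓝 ‖(T ^ m) w‖) :=
      (continuous_norm.tendsto _).comp (((T ^ m).continuous.tendsto w).comp hw)
    have : c ≤ ‖(T ^ m) w‖ :=
      ge_of_tendsto htm (eventually_atTop.2 ⟨1, fun N hN => hstep N hN⟩)
    exact this
  have hc0 : c = 0 := by
    have : c ≤ 0 := ge_of_tendsto hatend0 (Eventually.of_forall hcle)
    linarith
  -- conclude
  rw [hc0] at httend
  have hfinal := httend.cesaro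
  rw [tendsto_zero_iff_norm_tendsto_zero]
  have heq : ∀ N : ℕ, ‖(N : ℝ)⁻¹ • ∑ n ∈ Finset.range N, (T ^ n) u‖
      = (N : ℝ)⁻¹ * ∑ n ∈ Finset.range N, t n := by
    intro N
    rw [norm_smul, Real.norm_eq_abs, abs_of_nonneg (by positivity : (0:ℝ) ≤ (N:ℝ)⁻¹),
      aux_norm_sum hadd _ (fun n => hTpow n u hu) N]
  simpa only [heq] using hfinal
end

section
/- For the one-dimensional gene-expression flow φ_t(x,s) = (e^{−γt} x, s + t) on (0,∞)×(0,∞) with jump rate q(x,s) = ϱ(s) where ϱ(s) = h_T(s)/∫_s^∞ h_T(r) dr for a probability density h_T on (0,∞), the operator Ψ(λ) defined by Ψ(λ)f_∂(x,s) = e^{γs − λs − ∫_0^s ϱ(s−r) dr} f_∂(e^{γs}x, 0) followed by the boundary/burst operator Ψ satisfies ‖Ψ Ψ(λ)‖ = ∫_0^∞ e^{−λs} h_T(s) ds < 1 for every λ > 0. -/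
open MeasureTheory Set
open scoped ENNReal

namespace Stmt15

variable {hT : ℝ → ℝ}

lemma integrableOn_of_integral_eq_one {g : ℝ → ℝ} (h1 : ∫ x in Set.Ioi (0:ℝ), g x = 1) :
    IntegrableOn g (Set.Ioi 0) := by
  by_contra hcon
  rw [MeasureTheory.integral_undef hcon] at h1
  norm_num at h1

noncomputable def F (hT : ℝ → ℝ) (s : ℝ) : ℝ := ∫ r in Set.Ioc (0:ℝ) s, hT r

lemma F_nonneg (hTnn : ∀ s, 0 ≤ hT s) (s : ℝ) : 0 ≤ F hT s :=
  setIntegral_nonneg measurableSet_Ioc fun r _ => hTnn r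

lemma F_mono (hTnn : ∀ s, 0 ≤ hT s) (hTint : IntegrableOn hT (Set.Ioi 0)) :
    Monotone (F hT) := by
  intro a b hab
  exact setIntegral_mono_set (hTint.mono_set Set.Ioc_subset_Ioi_self)
    (Filter.Eventually.of_forall fun r => hTnn r)
    (HasSubset.Subset.eventuallyLE (Set.Ioc_subset_Ioc_right hab))

lemma F_measurable (hTnn : ∀ s, 0 ≤ hT s) (hTint : IntegrableOn hT (Set.Ioi 0)) :
    Measurable (F hT) := (F_mono hTnn hTint).measurable

lemma S_eq (hTint : IntegrableOn hT (Set.Ioi 0))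
    (hTprob : ∫ s in Set.Ioi (0 : ℝ), hT s = 1) {s : ℝ} (hs : 0 ≤ s) :
    ∫ r in Set.Ioi s, hT r = 1 - F hT s := by
  have hsplit : ∫ r in Set.Ioc 0 s ∪ Set.Ioi s, hT r
      = F hT s + ∫ r in Set.Ioi s, hT r :=
    setIntegral_union (Set.Ioc_disjoint_Ioi le_rfl) measurableSet_Ioi
      (hTint.mono_set Set.Ioc_subset_Ioi_self) (hTint.mono_set (Set.Ioi_subset_Ioi hs))
  rw [Set.Ioc_union_Ioi_eq_Ioi hs, hTprob] at hsplit
  linarith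

lemma F_le_one (hTnn : ∀ s, 0 ≤ hT s) (hTint : IntegrableOn hT (Set.Ioi 0))
    (hTprob : ∫ s in Set.Ioi (0 : ℝ), hT s = 1) (s : ℝ) : F hT s ≤ 1 := by
  rcases le_or_gt s 0 with hs | hs
  · have : Set.Ioc (0:ℝ) s = ∅ := Set.Ioc_eq_empty (by linarith)
    simp [F, this]
  · have h1 := S_eq hTint hTprob hs.le
    have h2 : 0 ≤ ∫ r in Set.Ioi s, hT r :=
      setIntegral_nonneg measurableSet_Ioi fun r _ => hTnn r
    linarith

noncomputable def Atil (hT : ℝ → ℝ) (n : ℕ) (s : ℝ) : ℝ≥0∞ :=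
  ∫⁻ r in Set.Ioc (0:ℝ) s, ENNReal.ofReal (hT r) * (ENNReal.ofReal (F hT r))^n

lemma Ftil_eq (hTnn : ∀ s, 0 ≤ hT s) (hTint : IntegrableOn hT (Set.Ioi 0)) (s : ℝ) :
    ∫⁻ u in Set.Ioc (0:ℝ) s, ENNReal.ofReal (hT u) = ENNReal.ofReal (F hT s) :=
  (MeasureTheory.ofReal_integral_eq_lintegral_ofReal (hTint.mono_set Set.Ioc_subset_Ioi_self)
    (Filter.Eventually.of_forall fun r => hTnn r)).symm

lemma Atil_mono (n : ℕ) : Monotone (Atil hT n) := fun a b hab =>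
  lintegral_mono' (Measure.restrict_mono (Set.Ioc_subset_Ioc_right hab) le_rfl) le_rfl

lemma Atil_measurable (n : ℕ) : Measurable (Atil hT n) := (Atil_mono n).measurable

lemma lemA (hTmeas : Measurable hT) (hTnn : ∀ s, 0 ≤ hT s)
    (hTint : IntegrableOn hT (Set.Ioi 0)) :
    ∀ (n : ℕ) (s : ℝ), ((n:ℝ≥0∞)+1) * Atil hT n s = (ENNReal.ofReal (F hT s))^(n+1) := by
  have Fmeas := F_measurable hTnn hTint
  intro n
  induction n with
  | zero =>
    intro s
    simpa [Atil] using Ftil_eq hTnn hTint s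
  | succ n ih =>
    intro s
    set μs := volume.restrict (Set.Ioc (0:ℝ) s) with hμs
    set g : ℝ → ℝ≥0∞ := fun u => ENNReal.ofReal (hT u) with hg
    set k : ℝ → ℝ≥0∞ := fun r => ENNReal.ofReal (hT r) * (ENNReal.ofReal (F hT r))^n with hk
    have gmeas : Measurable g := ENNReal.measurable_ofReal.comp hTmeas
    have kmeas : Measurable k :=
      (ENNReal.measurable_ofReal.comp hTmeas).mul
        ((ENNReal.measurable_ofReal.comp Fmeas).pow_const n)
    have ψ1meas : Measurable (fun p : ℝ × ℝ => ite (p.2 ≤ p.1) (k p.1 * g p.2) 0) :=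
      Measurable.ite (measurableSet_le measurable_snd measurable_fst)
        ((kmeas.comp measurable_fst).mul (gmeas.comp measurable_snd)) measurable_const
    have ψ2meas : Measurable (fun p : ℝ × ℝ => ite (p.2 < p.1) (g p.1 * k p.2) 0) :=
      Measurable.ite (measurableSet_lt measurable_snd measurable_fst)
        ((gmeas.comp measurable_fst).mul (kmeas.comp measurable_snd)) measurable_const
    have hAdef : Atil hT (n+1) s = ∫⁻ r, k r * ENNReal.ofReal (F hT r) ∂μs := by
      rw [Atil]
      congr 1 with r
      rw [hk, pow_succ, mul_assoc]
    -- (A)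
    have hA : Atil hT (n+1) s = ∫⁻ r, ∫⁻ u, ite (u ≤ r) (k r * g u) 0 ∂μs ∂μs := by
      rw [hAdef]
      refine setLIntegral_congr_fun measurableSet_Ioc
        (fun r hr => ?_)
      have h1 : k r * ENNReal.ofReal (F hT r) = k r * ∫⁻ u in Set.Ioc (0:ℝ) r, g u := by
        rw [Ftil_eq hTnn hTint r]
      rw [h1]
      have hset : Set.Iic r ∩ Set.Ioc (0:ℝ) s = Set.Ioc (0:ℝ) r := by
        rw [Set.inter_comm, Set.Ioc_inter_Iic, min_eq_right hr.2]
      have h2 : ∫⁻ u in Set.Ioc (0:ℝ) r, g u = ∫⁻ u, ite (u ≤ r) (g u) 0 ∂μs := by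
        have hi : ∀ u, ite (u ≤ r) (g u) 0 = (Set.Iic r).indicator g u := by
          intro u; simp [Set.indicator_apply]
        simp_rw [hi]
        rw [lintegral_indicator measurableSet_Iic, hμs,
          Measure.restrict_restrict measurableSet_Iic, hset]
      rw [h2, ← lintegral_const_mul _ (Measurable.ite measurableSet_Iic gmeas measurable_const)]
      congr 1 with u
      rcases le_or_gt u r with h | h <;> simp [h, not_le.mpr]
    -- (C/D)
    have hD : ∫⁻ u, g u * Atil hT n u ∂μs
        = ∫⁻ r, ∫⁻ u, ite (r < u) (g u * k r) 0 ∂μs ∂μs := by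
      have hstep : ∫⁻ u, g u * Atil hT n u ∂μs
          = ∫⁻ u, ∫⁻ r, ite (r < u) (g u * k r) 0 ∂μs ∂μs := by
        refine setLIntegral_congr_fun measurableSet_Ioc
          (fun u hu => ?_)
        have hIoo : Atil hT n u = ∫⁻ r in Set.Ioo (0:ℝ) u, k r := by
          rw [Atil, ← Measure.restrict_congr_set Ioo_ae_eq_Ioc]
        have hset : Set.Iio u ∩ Set.Ioc (0:ℝ) s = Set.Ioo (0:ℝ) u := by
          ext z
          constructor
          · rintro ⟨h1, h2, h3⟩; exact ⟨h2, h1⟩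
          · rintro ⟨h1, h2⟩; exact ⟨h2, h1, le_trans (le_of_lt h2) hu.2⟩
        have h2 : ∫⁻ r in Set.Ioo (0:ℝ) u, k r = ∫⁻ r, ite (r < u) (k r) 0 ∂μs := by
          have hi : ∀ r, ite (r < u) (k r) 0 = (Set.Iio u).indicator k r := by
            intro r; simp [Set.indicator_apply]
          simp_rw [hi]
          rw [lintegral_indicator measurableSet_Iio, hμs,
            Measure.restrict_restrict measurableSet_Iio, hset]
        rw [hIoo, h2, ← lintegral_const_mul _ (Measurable.ite measurableSet_Iio kmeas measurable_const)]
        congr 1 with r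
        rcases lt_or_ge r u with h | h <;> simp [h, not_lt.mpr]
      rw [hstep]
      exact lintegral_lintegral_swap ψ2meas.aemeasurable
    -- combine
    have hsum : Atil hT (n+1) s + ∫⁻ u, g u * Atil hT n u ∂μs
        = ENNReal.ofReal (F hT s) * Atil hT n s := by
      rw [hA, hD, ← lintegral_add_left
        (Measurable.lintegral_prod_right (f := fun r u => ite (u ≤ r) (k r * g u) 0) ψ1meas)]
      have : ∀ r, (∫⁻ u, ite (u ≤ r) (k r * g u) 0 ∂μs)
            + (∫⁻ u, ite (r < u) (g u * k r) 0 ∂μs)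
          = k r * ENNReal.ofReal (F hT s) := by
        intro r
        rw [← lintegral_add_left
          (Measurable.ite measurableSet_Iic (measurable_const.mul gmeas) measurable_const :
            Measurable fun u => ite (u ≤ r) (k r * g u) 0)]
        have : ∀ u, ite (u ≤ r) (k r * g u) 0 + ite (r < u) (g u * k r) 0 = k r * g u := by
          intro u
          rcases le_or_gt u r with h | h <;> simp [h, not_le.mpr, not_lt.mpr, mul_comm]
        simp_rw [this]
        rw [lintegral_const_mul _ gmeas, hμs, Ftil_eq hTnn hTint s]
      simp_rw [this]
      rw [lintegral_mul_const _ kmeas, hμs]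
      rw [mul_comm]
      rfl
    have eq2 : ((n:ℝ≥0∞)+1) * (∫⁻ u, g u * Atil hT n u ∂μs) = Atil hT (n+1) s := by
      rw [← lintegral_const_mul _ (f := fun u => g u * Atil hT n u) (gmeas.mul (Atil_measurable n))]
      have : ∀ u, ((n:ℝ≥0∞)+1) * (g u * Atil hT n u)
          = g u * (ENNReal.ofReal (F hT u))^(n+1) := by
        intro u
        rw [mul_left_comm, ih u]
      simp_rw [this]
      rfl
    have hcast : ((n+1:ℕ):ℝ≥0∞) + 1 = ((n:ℝ≥0∞)+1) + 1 := by push_cast; ring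
    rw [hcast]
    have expand : ((n:ℝ≥0∞)+1+1) * Atil hT (n+1) s
        = ((n:ℝ≥0∞)+1) * (Atil hT (n+1) s + ∫⁻ u, g u * Atil hT n u ∂μs) := by
      rw [mul_add, eq2]; ring
    rw [expand, hsum, mul_left_comm, ih s, ← pow_succ']

lemma logS (hTmeas : Measurable hT) (hTnn : ∀ s, 0 ≤ hT s)
    (hTint : IntegrableOn hT (Set.Ioi 0)) {s : ℝ}
    (hFs : F hT s < 1) :
    ∫ r in Set.Ioc (0:ℝ) s, hT r / (1 - F hT r) = -Real.log (1 - F hT s) := by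
  have Fmeas := F_measurable hTnn hTint
  have hFs0 := F_nonneg hTnn s
  have hsummable : Summable (fun n : ℕ => (F hT s) ^ (n+1) / ((n:ℝ)+1)) :=
    (Real.hasSum_pow_div_log_of_abs_lt_one
      (by rwa [abs_of_nonneg hFs0])).summable
  have L1 : ∫⁻ r in Set.Ioc (0:ℝ) s, ENNReal.ofReal (hT r / (1 - F hT r))
      = ENNReal.ofReal (-Real.log (1 - F hT s)) := by
    have key : ∀ r ∈ Set.Ioc (0:ℝ) s, ENNReal.ofReal (hT r / (1 - F hT r))
        = ∑' n : ℕ, ENNReal.ofReal (hT r) * (ENNReal.ofReal (F hT r))^n := by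
      intro r hr
      have h1 : 0 ≤ F hT r := F_nonneg hTnn r
      have h2 : F hT r < 1 := lt_of_le_of_lt (F_mono hTnn hTint hr.2) hFs
      have hpos : 0 < 1 - F hT r := by linarith
      have hsub : ENNReal.ofReal (1 - F hT r) = 1 - ENNReal.ofReal (F hT r) := by
        rw [ENNReal.ofReal_sub _ h1, ENNReal.ofReal_one]
      rw [div_eq_mul_inv, ENNReal.ofReal_mul (hTnn r), ENNReal.tsum_mul_left,
        ENNReal.tsum_geometric, ENNReal.ofReal_inv_of_pos hpos, hsub]
    rw [setLIntegral_congr_fun measurableSet_Ioc key]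
    rw [lintegral_tsum (f := fun n x => ENNReal.ofReal (hT x) * (ENNReal.ofReal (F hT x))^n) (fun n =>
      (hTmeas.ennreal_ofReal.mul (Fmeas.ennreal_ofReal.pow_const n)).aemeasurable)]
    have hA : ∀ n : ℕ, Atil hT n s
        = ENNReal.ofReal ((F hT s)^(n+1) / ((n:ℝ)+1)) := by
      intro n
      have h1 : Atil hT n s = (ENNReal.ofReal (F hT s))^(n+1) / ((n:ℝ≥0∞)+1) :=
        (ENNReal.eq_div_iff (by simp) (by simp)).mpr (lemA hTmeas hTnn hTint n s)
      rw [h1, ENNReal.ofReal_div_of_pos (by positivity), ENNReal.ofReal_pow hFs0]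
      congr 1
      rw [ENNReal.ofReal_add (by positivity) zero_le_one, ENNReal.ofReal_natCast,
        ENNReal.ofReal_one]
    calc ∑' n : ℕ, ∫⁻ r in Set.Ioc (0:ℝ) s,
          ENNReal.ofReal (hT r) * (ENNReal.ofReal (F hT r))^n
        = ∑' n : ℕ, ENNReal.ofReal ((F hT s)^(n+1) / ((n:ℝ)+1)) := by
          refine tsum_congr fun n => hA n
      _ = ENNReal.ofReal (∑' n : ℕ, (F hT s)^(n+1) / ((n:ℝ)+1)) :=
          (ENNReal.ofReal_tsum_of_nonneg (fun n => by positivity) hsummable).symm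
      _ = ENNReal.ofReal (-Real.log (1 - F hT s)) := by
          rw [(Real.hasSum_pow_div_log_of_abs_lt_one
            (by rwa [abs_of_nonneg hFs0])).tsum_eq]
  have nonneg_ae : 0 ≤ᵐ[volume.restrict (Set.Ioc (0:ℝ) s)]
      fun r => hT r / (1 - F hT r) := by
    refine (ae_restrict_iff' measurableSet_Ioc).mpr (Filter.Eventually.of_forall ?_)
    intro r hr
    have h2 : F hT r < 1 := lt_of_le_of_lt (F_mono hTnn hTint hr.2) hFs
    exact div_nonneg (hTnn r) (by linarith)
  rw [integral_eq_lintegral_of_nonneg_ae nonneg_ae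
    ((hTmeas.div (measurable_const.sub Fmeas)).aestronglyMeasurable), L1,
    ENNReal.toReal_ofReal]
  exact neg_nonneg.mpr (Real.log_nonpos (by linarith) (by linarith))

lemma J_eq (hTmeas : Measurable hT) (hTnn : ∀ s, 0 ≤ hT s)
    (hTint : IntegrableOn hT (Set.Ioi 0))
    (hTprob : ∫ s in Set.Ioi (0 : ℝ), hT s = 1)
    {rho : ℝ → ℝ} (hrho : ∀ s, rho s = hT s / ∫ r in Set.Ioi s, hT r)
    {s : ℝ} (hs : 0 < s) (hFs : F hT s < 1) :
    ∫ r in Set.Ioc (0:ℝ) s, rho (s - r) = -Real.log (1 - F hT s) := by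
  have h1 : ∫ r in Set.Ioc (0:ℝ) s, rho (s - r)
      = ∫ r in (0:ℝ)..s, rho (s - r) := (intervalIntegral.integral_of_le hs.le).symm
  rw [h1, intervalIntegral.integral_comp_sub_left (fun r => rho r) s, sub_self, sub_zero,
    intervalIntegral.integral_of_le hs.le]
  rw [setIntegral_congr_fun measurableSet_Ioc
    (fun r hr => by rw [hrho r, S_eq hTint hTprob hr.1.le])]
  exact logS hTmeas hTnn hTint hFs

lemma ae_hT_zero (hTnn : ∀ s, 0 ≤ hT s) (hTint : IntegrableOn hT (Set.Ioi 0))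
    (hTprob : ∫ s in Set.Ioi (0 : ℝ), hT s = 1) :
    ∀ᵐ s ∂(volume : Measure ℝ), s ∈ Set.Ioi (0:ℝ) → (F hT s = 1 → hT s = 0) := by
  by_cases hZ : ∃ s : ℝ, 0 < s ∧ F hT s = 1
  · set Z : Set ℝ := {s : ℝ | 0 < s ∧ F hT s = 1} with hZdef
    have hbd : BddBelow Z := ⟨0, fun z hz => hz.1.le⟩
    have hne : Z.Nonempty := hZ
    set t₀ := sInf Z with ht₀
    have key : ∀ n : ℕ, ∀ᵐ s ∂(volume : Measure ℝ),
        s ∈ Set.Ioi (t₀ + 1/((n:ℝ)+1)) → hT s = 0 := by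
      intro n
      have hlt : sInf Z < t₀ + 1/((n:ℝ)+1) :=
        lt_add_of_pos_right _ (by positivity)
      obtain ⟨a, haZ, ha⟩ := (csInf_lt_iff hbd hne).mp hlt
      have hSa : ∫ r in Set.Ioi a, hT r = 0 := by
        rw [S_eq hTint hTprob haZ.1.le, haZ.2]; ring
      have hint : IntegrableOn hT (Set.Ioi a) :=
        hTint.mono_set (Set.Ioi_subset_Ioi haZ.1.le)
      have hae0 : hT =ᵐ[volume.restrict (Set.Ioi a)] 0 :=
        (integral_eq_zero_iff_of_nonneg hTnn hint).mp hSa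
      have h2 : ∀ᵐ s ∂(volume : Measure ℝ), s ∈ Set.Ioi a → hT s = 0 :=
        ae_imp_of_ae_restrict hae0
      filter_upwards [h2] with s hs hmem
      exact hs (lt_trans ha hmem)
    have hall : ∀ᵐ s ∂(volume : Measure ℝ),
        ∀ n : ℕ, s ∈ Set.Ioi (t₀ + 1/((n:ℝ)+1)) → hT s = 0 := ae_all_iff.mpr key
    have hsing : ∀ᵐ s ∂(volume : Measure ℝ), s ≠ t₀ := by
      have : (volume : Measure ℝ) {t₀} = 0 := measure_singleton t₀
      exact measure_eq_zero_iff_ae_notMem.mp this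
    filter_upwards [hall, hsing] with s h1 h2 hs hF1
    have hsZ : s ∈ Z := ⟨hs, hF1⟩
    have hts : t₀ ≤ s := csInf_le hbd hsZ
    have hts' : t₀ < s := lt_of_le_of_ne hts (Ne.symm h2)
    obtain ⟨n, hn⟩ := exists_nat_one_div_lt (sub_pos.mpr hts')
    exact h1 n (by simp only [Set.mem_Ioi]; linarith [hn])
  · push_neg at hZ
    refine Filter.Eventually.of_forall fun s hs hF1 => absurd hF1 (hZ s hs)

lemma laplace_lt_one {lam : ℝ} (hlam : 0 < lam) (hTmeas : Measurable hT)
    (hTnn : ∀ s, 0 ≤ hT s) (hTint : IntegrableOn hT (Set.Ioi 0))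
    (hTprob : ∫ s in Set.Ioi (0 : ℝ), hT s = 1) :
    (∫ s in Set.Ioi (0:ℝ), Real.exp (-lam * s) * hT s) < 1 := by
  have hmeas2 : Measurable fun s => Real.exp (-lam * s) * hT s :=
    (Real.measurable_exp.comp (measurable_id.const_mul (-lam))).mul hTmeas
  have hint2 : IntegrableOn (fun s => Real.exp (-lam * s) * hT s) (Set.Ioi 0) := by
    refine Integrable.mono' hTint hmeas2.aestronglyMeasurable ?_
    refine (ae_restrict_iff' measurableSet_Ioi).mpr (Filter.Eventually.of_forall ?_)
    intro s hs
    rw [Real.norm_eq_abs, abs_of_nonneg (mul_nonneg (Real.exp_nonneg _) (hTnn s))]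
    exact mul_le_of_le_one_left (hTnn s)
      (Real.exp_le_one_iff.mpr (by nlinarith [Set.mem_Ioi.mp hs]))
  set d : ℝ → ℝ := fun s => hT s - Real.exp (-lam * s) * hT s with hd
  have hd_int : IntegrableOn d (Set.Ioi 0) := hTint.sub hint2
  have hd_nn : 0 ≤ᵐ[volume.restrict (Set.Ioi (0:ℝ))] d := by
    refine (ae_restrict_iff' measurableSet_Ioi).mpr (Filter.Eventually.of_forall ?_)
    intro s hs
    have h1 : Real.exp (-lam * s) ≤ 1 :=
      Real.exp_le_one_iff.mpr (by nlinarith [Set.mem_Ioi.mp hs])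
    have h2 := mul_nonneg (sub_nonneg.mpr h1) (hTnn s)
    simp only [Pi.zero_apply, hd]
    nlinarith [h2]
  have hsplit : ∫ s in Set.Ioi (0:ℝ), d s
      = 1 - ∫ s in Set.Ioi (0:ℝ), Real.exp (-lam * s) * hT s := by
    rw [hd]
    rw [integral_sub hTint hint2, hTprob]
  have hdne : ∫ s in Set.Ioi (0:ℝ), d s ≠ 0 := by
    intro h0
    have hdae : d =ᵐ[volume.restrict (Set.Ioi (0:ℝ))] 0 :=
      (integral_eq_zero_iff_of_nonneg_ae hd_nn hd_int).mp h0
    have hTae : hT =ᵐ[volume.restrict (Set.Ioi (0:ℝ))] 0 := by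
      have h2 : ∀ᵐ s ∂(volume.restrict (Set.Ioi (0:ℝ))), s ∈ Set.Ioi (0:ℝ) :=
        (ae_restrict_iff' measurableSet_Ioi).mpr (Filter.Eventually.of_forall fun s hs => hs)
      filter_upwards [hdae, h2] with s hds hs
      have hexp : Real.exp (-lam * s) < 1 :=
        Real.exp_lt_one_iff.mpr (by nlinarith [Set.mem_Ioi.mp hs])
      have : hT s * (1 - Real.exp (-lam * s)) = 0 := by
        simp only [hd, Pi.zero_apply] at hds; nlinarith [hds]
      rcases mul_eq_zero.mp this with h | h
      · exact h
      · nlinarith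
    have : ∫ s in Set.Ioi (0:ℝ), hT s = 0 := by
      rw [integral_congr_ae hTae]; simp
    rw [hTprob] at this; norm_num at this
  have hd0 : 0 ≤ ∫ s in Set.Ioi (0:ℝ), d s := integral_nonneg_of_ae hd_nn
  have : 0 < ∫ s in Set.Ioi (0:ℝ), d s := lt_of_le_of_ne hd0 (Ne.symm hdne)
  linarith [hsplit ▸ this]

lemma laplace_integrable {lam : ℝ} (hlam : 0 < lam) (hTmeas : Measurable hT)
    (hTnn : ∀ s, 0 ≤ hT s) (hTint : IntegrableOn hT (Set.Ioi 0)) :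
    IntegrableOn (fun s => Real.exp (-lam * s) * hT s) (Set.Ioi 0) := by
  have hmeas2 : Measurable fun s => Real.exp (-lam * s) * hT s :=
    (Real.measurable_exp.comp (measurable_id.const_mul (-lam))).mul hTmeas
  refine Integrable.mono' hTint hmeas2.aestronglyMeasurable ?_
  refine (ae_restrict_iff' measurableSet_Ioi).mpr (Filter.Eventually.of_forall ?_)
  intro s hs
  rw [Real.norm_eq_abs, abs_of_nonneg (mul_nonneg (Real.exp_nonneg _) (hTnn s))]
  exact mul_le_of_le_one_left (hTnn s)
    (Real.exp_le_one_iff.mpr (by nlinarith [Set.mem_Ioi.mp hs]))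

noncomputable def vfun (hT : ℝ → ℝ) (γ lam : ℝ) (s : ℝ) : ℝ :=
  if F hT s = 1 then 0 else hT s * Real.exp (γ*s - lam*s)

noncomputable def Psi (g h : ℝ → ℝ) (γ : ℝ) (p : ℝ × ℝ) (y : ℝ) : ℝ≥0∞ :=
  if 0 < y ∧ y ≤ p.1 then
    ENNReal.ofReal (g (Real.exp (γ * p.2) * y)) * ENNReal.ofReal (h (p.1 - y)) else 0

noncomputable def Yfun (g h : ℝ → ℝ) (γ : ℝ) (p : ℝ × ℝ) : ℝ≥0∞ := ∫⁻ y, Psi g h γ p y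

lemma rhoE_eq (γ lam : ℝ) (hTmeas : Measurable hT) (hTnn : ∀ s, 0 ≤ hT s)
    (hTint : IntegrableOn hT (Set.Ioi 0))
    (hTprob : ∫ s in Set.Ioi (0 : ℝ), hT s = 1)
    {rho : ℝ → ℝ} (hrho : ∀ s, rho s = hT s / ∫ r in Set.Ioi s, hT r)
    {s : ℝ} (hs : s ∈ Set.Ioi (0:ℝ)) :
    rho s * Real.exp (γ*s - lam*s - ∫ r in Set.Ioc (0:ℝ) s, rho (s - r))
      = vfun hT γ lam s := by
  rw [Set.mem_Ioi] at hs
  by_cases hF : F hT s = 1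
  · rw [vfun, if_pos hF, hrho s, S_eq hTint hTprob hs.le, hF]
    norm_num
  · rw [vfun, if_neg hF]
    have hFle := F_le_one hTnn hTint hTprob s
    have hFs : F hT s < 1 := lt_of_le_of_ne hFle hF
    have hpos : 0 < 1 - F hT s := by linarith
    rw [J_eq hTmeas hTnn hTint hTprob hrho hs hFs, hrho s, S_eq hTint hTprob hs.le]
    rw [show γ*s - lam*s - -Real.log (1 - F hT s)
      = (γ*s - lam*s) + Real.log (1 - F hT s) by ring]
    rw [Real.exp_add, Real.exp_log hpos]
    field_simp

lemma Psi_measurable {g h : ℝ → ℝ} (gmeas : Measurable g) (hmeas : Measurable h) (γ : ℝ) :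
    Measurable (fun q : (ℝ × ℝ) × ℝ => Psi g h γ q.1 q.2) := by
  apply Measurable.ite
  · exact MeasurableSet.inter
      (measurableSet_lt measurable_const measurable_snd)
      (measurableSet_le measurable_snd (measurable_fst.comp measurable_fst))
  · exact ((gmeas.comp ((Real.measurable_exp.comp
      ((measurable_snd.comp measurable_fst).const_mul γ)).mul measurable_snd)).ennreal_ofReal).mul
      ((hmeas.comp ((measurable_fst.comp measurable_fst).sub measurable_snd)).ennreal_ofReal)
  · exact measurable_const

lemma Yfun_measurable {g h : ℝ → ℝ} (gmeas : Measurable g) (hmeas : Measurable h) (γ : ℝ) :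
    Measurable (Yfun g h γ) :=
  Measurable.lintegral_prod_right' (Psi_measurable gmeas hmeas γ)

lemma Yfun_Ioc {g h : ℝ → ℝ} (γ : ℝ) (x s : ℝ) :
    Yfun g h γ (x, s) = ∫⁻ y in Set.Ioc (0:ℝ) x,
      ENNReal.ofReal (g (Real.exp (γ * s) * y)) * ENNReal.ofReal (h (x - y)) := by
  rw [Yfun, ← lintegral_indicator measurableSet_Ioc]
  refine lintegral_congr fun y => ?_
  simp only [Psi, Set.indicator_apply, Set.mem_Ioc]

end Stmt15

open Stmt15 in
/-- Gene expression with bursting and memory: the composed boundary operator `Ψ Ψ(λ)` on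
`L¹(Γ⁻, m⁻) = L¹((0,∞))` has norm `∫_0^∞ e^{-λ s} h_T(s) ds < 1`: on every nonnegative
integrable `f∂` its total mass is multiplied by exactly that Laplace-transform factor. -/
theorem stmt_15 (γ lam : ℝ) (hγ : 0 < γ) (hlam : 0 < lam)
    (hT h : ℝ → ℝ) (hTmeas : Measurable hT) (hmeas : Measurable h)
    (hTnn : ∀ s, 0 ≤ hT s) (hnn : ∀ s, 0 ≤ h s)
    (hTprob : ∫ s in Set.Ioi (0 : ℝ), hT s = 1)
    (hprob : ∫ s in Set.Ioi (0 : ℝ), h s = 1)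
    (rho : ℝ → ℝ) (hrho : ∀ s, rho s = hT s / ∫ r in Set.Ioi s, hT r) :
    (∀ f : ℝ → ℝ, (∀ x, 0 ≤ f x) → Integrable f (volume.restrict (Set.Ioi (0 : ℝ))) →
      (∫ x in Set.Ioi (0 : ℝ), ∫ s in Set.Ioi (0 : ℝ), ∫ y in Set.Ioc (0 : ℝ) x,
          rho s * (Real.exp (γ * s - lam * s - ∫ r in Set.Ioc (0 : ℝ) s, rho (s - r))
            * f (Real.exp (γ * s) * y)) * h (x - y))
        = (∫ s in Set.Ioi (0 : ℝ), Real.exp (-lam * s) * hT s) * ∫ x in Set.Ioi (0 : ℝ), f x) ∧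
    (∫ s in Set.Ioi (0 : ℝ), Real.exp (-lam * s) * hT s) < 1 := by
  have hTint : IntegrableOn hT (Set.Ioi 0) := integrableOn_of_integral_eq_one hTprob
  have hint : IntegrableOn h (Set.Ioi 0) := integrableOn_of_integral_eq_one hprob
  have Fmeas : Measurable (F hT) := F_measurable hTnn hTint
  have rho_nn : ∀ s, 0 ≤ rho s := fun s => by
    rw [hrho s]
    exact div_nonneg (hTnn s) (setIntegral_nonneg measurableSet_Ioi fun r _ => hTnn r)
  constructor
  · intro f f_nn f_int
    obtain ⟨g, gmeas, gnn, hfg⟩ : ∃ g : ℝ → ℝ, Measurable g ∧ (∀ y, 0 ≤ g y) ∧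
        f =ᵐ[volume.restrict (Set.Ioi (0:ℝ))] g := by
      obtain ⟨g₀, g₀meas, hfg₀⟩ := f_int.1
      refine ⟨fun y => max (g₀ y) 0, g₀meas.measurable.max measurable_const,
        fun y => le_max_right _ _, ?_⟩
      filter_upwards [hfg₀] with y hy
      rw [← hy, max_eq_left (f_nn y)]
    have hg_int : IntegrableOn g (Set.Ioi (0:ℝ)) := f_int.congr hfg
    have hIg_eq : ∫ y in Set.Ioi (0:ℝ), f y = ∫ y in Set.Ioi (0:ℝ), g y :=
      integral_congr_ae hfg
    have hIg_nn : 0 ≤ ∫ y in Set.Ioi (0:ℝ), g y :=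
      setIntegral_nonneg measurableSet_Ioi fun y _ => gnn y
    have hL_nn : 0 ≤ ∫ s in Set.Ioi (0:ℝ), Real.exp (-lam * s) * hT s :=
      setIntegral_nonneg measurableSet_Ioi fun s _ =>
        mul_nonneg (Real.exp_nonneg _) (hTnn s)
    have vmeas : Measurable (vfun hT γ lam) := by
      apply Measurable.ite (Fmeas (measurableSet_singleton 1)) measurable_const
      exact hTmeas.mul (Real.measurable_exp.comp (by fun_prop))
    have vnn : ∀ s, 0 ≤ vfun hT γ lam s := fun s => by
      rw [vfun]
      by_cases hc : F hT s = 1 <;>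
        simp [hc, mul_nonneg (hTnn s) (Real.exp_nonneg _)]
    have Ymeas : Measurable (Yfun g h γ) := Yfun_measurable gmeas hmeas γ
    -- scaled a.e. equality of f and g
    have hfg_scaled : ∀ c : ℝ, c ≠ 0 → ∀ᵐ y ∂(volume : Measure ℝ),
        (c * y ∈ Set.Ioi (0:ℝ) → f (c * y) = g (c * y)) := by
      intro c hc
      have h1 : ∀ᵐ y ∂(volume : Measure ℝ), y ∈ Set.Ioi (0:ℝ) → f y = g y :=
        ae_imp_of_ae_restrict hfg
      have hqmp : Measure.QuasiMeasurePreserving (fun y : ℝ => c * y) volume volume := by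
        refine ⟨measurable_const_mul c, ?_⟩
        rw [Real.map_volume_mul_left hc]
        exact Measure.smul_absolutelyContinuous
      exact hqmp.ae h1
    -- inner Bochner-to-lintegral conversion
    have inner_eq : ∀ x s : ℝ, (∫ y in Set.Ioc (0:ℝ) x,
        rho s * (Real.exp (γ * s - lam * s - ∫ r in Set.Ioc (0:ℝ) s, rho (s - r))
          * f (Real.exp (γ * s) * y)) * h (x - y))
        = (ENNReal.ofReal (rho s * Real.exp (γ * s - lam * s
            - ∫ r in Set.Ioc (0:ℝ) s, rho (s - r))) * Yfun g h γ (x, s)).toReal := by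
      intro x s
      have hc : (0:ℝ) < Real.exp (γ * s) := Real.exp_pos _
      have step1 : (fun y => rho s * (Real.exp (γ * s - lam * s
            - ∫ r in Set.Ioc (0:ℝ) s, rho (s - r)) * f (Real.exp (γ * s) * y)) * h (x - y))
          =ᵐ[volume.restrict (Set.Ioc (0:ℝ) x)]
          (fun y => rho s * (Real.exp (γ * s - lam * s
            - ∫ r in Set.Ioc (0:ℝ) s, rho (s - r)) * g (Real.exp (γ * s) * y)) * h (x - y)) := by
        refine (ae_restrict_iff' measurableSet_Ioc).mpr ?_
        filter_upwards [hfg_scaled (Real.exp (γ * s)) hc.ne'] with y hy hyIoc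
        rw [hy (Set.mem_Ioi.mpr (mul_pos hc hyIoc.1))]
      rw [integral_congr_ae step1]
      have nn : 0 ≤ᵐ[volume.restrict (Set.Ioc (0:ℝ) x)]
          (fun y => rho s * (Real.exp (γ * s - lam * s
            - ∫ r in Set.Ioc (0:ℝ) s, rho (s - r)) * g (Real.exp (γ * s) * y)) * h (x - y)) :=
        Filter.Eventually.of_forall fun y => mul_nonneg (mul_nonneg (rho_nn s)
          (mul_nonneg (Real.exp_nonneg _) (gnn _))) (hnn _)
      have gm1 : Measurable (fun y : ℝ => rho s * (Real.exp (γ * s - lam * s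
            - ∫ r in Set.Ioc (0:ℝ) s, rho (s - r)) * g (Real.exp (γ * s) * y)) * h (x - y)) := by
        fun_prop
      rw [integral_eq_lintegral_of_nonneg_ae nn gm1.aestronglyMeasurable]
      congr 1
      rw [Yfun_Ioc γ x s, ← lintegral_const_mul _ (by fun_prop :
        Measurable fun y : ℝ => ENNReal.ofReal (g (Real.exp (γ * s) * y))
          * ENNReal.ofReal (h (x - y)))]
      refine lintegral_congr fun y => ?_
      rw [show rho s * (Real.exp (γ * s - lam * s
            - ∫ r in Set.Ioc (0:ℝ) s, rho (s - r)) * g (Real.exp (γ * s) * y)) * h (x - y)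
          = (rho s * Real.exp (γ * s - lam * s - ∫ r in Set.Ioc (0:ℝ) s, rho (s - r)))
            * (g (Real.exp (γ * s) * y) * h (x - y)) by ring]
      rw [ENNReal.ofReal_mul (mul_nonneg (rho_nn s) (Real.exp_nonneg _)),
        ENNReal.ofReal_mul (gnn _)]
    -- the KEY identity in ℝ≥0∞
    have Wmeas : Measurable (fun p : ℝ × ℝ => ENNReal.ofReal (vfun hT γ lam p.2)
        * Yfun g h γ p) := ((vmeas.comp measurable_snd).ennreal_ofReal).mul Ymeas
    have KEY : (∫⁻ x in Set.Ioi (0:ℝ), ∫⁻ s in Set.Ioi (0:ℝ),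
          ENNReal.ofReal (vfun hT γ lam s) * Yfun g h γ (x, s))
        = ENNReal.ofReal (∫ s in Set.Ioi (0:ℝ), Real.exp (-lam * s) * hT s)
          * ENNReal.ofReal (∫ y in Set.Ioi (0:ℝ), g y) := by
      have swap1 : (∫⁻ x in Set.Ioi (0:ℝ), ∫⁻ s in Set.Ioi (0:ℝ),
            ENNReal.ofReal (vfun hT γ lam s) * Yfun g h γ (x, s))
          = ∫⁻ s in Set.Ioi (0:ℝ), ∫⁻ x in Set.Ioi (0:ℝ),
            ENNReal.ofReal (vfun hT γ lam s) * Yfun g h γ (x, s) :=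
        lintegral_lintegral_swap Wmeas.aemeasurable
      rw [swap1]
      have perS : ∀ s ∈ Set.Ioi (0:ℝ), (∫⁻ x in Set.Ioi (0:ℝ),
            ENNReal.ofReal (vfun hT γ lam s) * Yfun g h γ (x, s))
          = ENNReal.ofReal (vfun hT γ lam s
              * ((Real.exp (γ * s))⁻¹ * ∫ y in Set.Ioi (0:ℝ), g y)) := by
        intro s hs
        have hc : (0:ℝ) < Real.exp (γ * s) := Real.exp_pos _
        have hYx : Measurable (fun x => Yfun g h γ (x, s)) :=
          Ymeas.comp (measurable_id.prodMk measurable_const)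
        rw [lintegral_const_mul _ hYx, ENNReal.ofReal_mul (vnn s)]
        congr 1
        -- compute ∫⁻ x in Ioi 0, Yfun (x, s)
        have swap2 : (∫⁻ x in Set.Ioi (0:ℝ), Yfun g h γ (x, s))
            = ∫⁻ y, ∫⁻ x in Set.Ioi (0:ℝ), Psi g h γ (x, s) y ∂(volume : Measure ℝ) := by
          have hm : Measurable (fun p : ℝ × ℝ => Psi g h γ (p.1, s) p.2) :=
            (Psi_measurable gmeas hmeas γ).comp
              (((measurable_fst.prodMk measurable_const)).prodMk measurable_snd)
          exact lintegral_lintegral_swap hm.aemeasurable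
        rw [swap2]
        have hk0 : ∀ y : ℝ, y ∉ Set.Ioi (0:ℝ)
            → (∫⁻ x in Set.Ioi (0:ℝ), Psi g h γ (x, s) y) = 0 := by
          intro y hy
          have hz : ∀ x : ℝ, Psi g h γ (x, s) y = 0 := by
            intro x
            rw [Psi, if_neg]
            rintro ⟨h1, -⟩
            exact hy h1
          simp [hz]
        have restr : (∫⁻ y, ∫⁻ x in Set.Ioi (0:ℝ), Psi g h γ (x, s) y ∂(volume : Measure ℝ))
            = ∫⁻ y in Set.Ioi (0:ℝ), ∫⁻ x in Set.Ioi (0:ℝ), Psi g h γ (x, s) y := by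
          rw [← lintegral_indicator measurableSet_Ioi]
          refine lintegral_congr fun y => ?_
          by_cases hy : y ∈ Set.Ioi (0:ℝ)
          · rw [Set.indicator_of_mem hy]
          · rw [Set.indicator_of_notMem hy, hk0 y hy]
        rw [restr]
        have inner_x : ∀ y ∈ Set.Ioi (0:ℝ), (∫⁻ x in Set.Ioi (0:ℝ), Psi g h γ (x, s) y)
            = ENNReal.ofReal (g (Real.exp (γ * s) * y)) := by
          intro y hy
          rw [Set.mem_Ioi] at hy
          have hpt : ∀ x : ℝ, Psi g h γ (x, s) y = (Set.Ici y).indicator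
              (fun x => ENNReal.ofReal (g (Real.exp (γ * s) * y))
                * ENNReal.ofReal (h (x - y))) x := by
            intro x
            rw [Psi]
            simp only [Set.indicator_apply, Set.mem_Ici]
            by_cases hxy : y ≤ x
            · rw [if_pos ⟨hy, hxy⟩, if_pos hxy]
            · rw [if_neg (fun hc2 => hxy hc2.2), if_neg hxy]
          simp_rw [hpt]
          rw [lintegral_indicator measurableSet_Ici,
            Measure.restrict_restrict measurableSet_Ici]
          have hIci : Set.Ici y ∩ Set.Ioi (0:ℝ) = Set.Ici y :=
            Set.inter_eq_left.mpr (fun z hz => lt_of_lt_of_le hy hz)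
          rw [hIci, lintegral_const_mul _
            (by fun_prop : Measurable fun a : ℝ => ENNReal.ofReal (h (a - y)))]
          have htrans : (∫⁻ x in Set.Ici y, ENNReal.ofReal (h (x - y)))
              = ∫⁻ z in Set.Ici (0:ℝ), ENNReal.ofReal (h z) := by
            have hmp := measurePreserving_add_right (volume : Measure ℝ) y
            have hpre : (fun x : ℝ => x + y) ⁻¹' (Set.Ici y) = Set.Ici (0:ℝ) := by
              ext z
              simp [Set.mem_Ici, le_add_iff_nonneg_left]
            have := hmp.setLIntegral_comp_preimage (s := Set.Ici y) measurableSet_Ici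
              (f := fun b => ENNReal.ofReal (h (b - y)))
              ((hmeas.comp (measurable_id.sub_const y)).ennreal_ofReal)
            rw [hpre] at this
            rw [← this]
            refine setLIntegral_congr_fun measurableSet_Ici
              (fun z _ => ?_)
            simp
          have hone : (∫⁻ z in Set.Ici (0:ℝ), ENNReal.ofReal (h z)) = 1 := by
            rw [← Measure.restrict_congr_set Ioi_ae_eq_Ici,
              ← MeasureTheory.ofReal_integral_eq_lintegral_ofReal hint
                (Filter.Eventually.of_forall hnn), hprob, ENNReal.ofReal_one]
          rw [htrans, hone, mul_one]
        rw [setLIntegral_congr_fun measurableSet_Ioi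
          inner_x]
        have hcint : IntegrableOn (fun y => g (Real.exp (γ * s) * y)) (Set.Ioi (0:ℝ)) := by
          refine (integrableOn_Ioi_comp_mul_left_iff g 0 hc).mpr ?_
          simpa [mul_zero] using hg_int
        rw [← MeasureTheory.ofReal_integral_eq_lintegral_ofReal hcint
          (Filter.Eventually.of_forall fun y => gnn _)]
        congr 1
        rw [integral_comp_mul_left_Ioi g 0 hc]
        simp [mul_zero, smul_eq_mul]
      rw [setLIntegral_congr_fun measurableSet_Ioi
        perS]
      have hae3 : ∀ᵐ s ∂(volume.restrict (Set.Ioi (0:ℝ))),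
          ENNReal.ofReal (vfun hT γ lam s
            * ((Real.exp (γ * s))⁻¹ * ∫ y in Set.Ioi (0:ℝ), g y))
          = ENNReal.ofReal (Real.exp (-lam * s) * hT s * ∫ y in Set.Ioi (0:ℝ), g y) := by
        filter_upwards [(ae_restrict_iff' measurableSet_Ioi).mpr
          (ae_hT_zero hTnn hTint hTprob)] with s hs1
        by_cases hF : F hT s = 1
        · rw [vfun, if_pos hF, hs1 hF]
          simp
        · rw [vfun, if_neg hF]
          congr 1
          have hexp : Real.exp (γ * s - lam * s)
              = Real.exp (-lam * s) * Real.exp (γ * s) := by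
            rw [← Real.exp_add]; ring_nf
          rw [hexp]
          field_simp
      rw [lintegral_congr_ae hae3]
      have hint3 : IntegrableOn
          (fun s => Real.exp (-lam * s) * hT s * ∫ y in Set.Ioi (0:ℝ), g y)
          (Set.Ioi (0:ℝ)) :=
        (laplace_integrable hlam hTmeas hTnn hTint).mul_const _
      rw [← MeasureTheory.ofReal_integral_eq_lintegral_ofReal hint3
        (Filter.Eventually.of_forall fun s =>
          mul_nonneg (mul_nonneg (Real.exp_nonneg _) (hTnn s)) hIg_nn)]
      rw [integral_mul_const, ENNReal.ofReal_mul hL_nn]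
    -- final assembly
    have KEYfin : (∫⁻ x in Set.Ioi (0:ℝ), ∫⁻ s in Set.Ioi (0:ℝ),
        ENNReal.ofReal (vfun hT γ lam s) * Yfun g h γ (x, s)) ≠ ⊤ := by
      rw [KEY]
      exact ENNReal.mul_ne_top ENNReal.ofReal_ne_top ENNReal.ofReal_ne_top
    have hZmeas : Measurable (fun x => ∫⁻ s in Set.Ioi (0:ℝ),
        ENNReal.ofReal (vfun hT γ lam s) * Yfun g h γ (x, s)) :=
      Measurable.lintegral_prod_right' Wmeas
    have hBae : ∀ᵐ x ∂(volume.restrict (Set.Ioi (0:ℝ))),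
        (∫ s in Set.Ioi (0:ℝ), ∫ y in Set.Ioc (0:ℝ) x,
          rho s * (Real.exp (γ * s - lam * s - ∫ r in Set.Ioc (0:ℝ) s, rho (s - r))
            * f (Real.exp (γ * s) * y)) * h (x - y))
        = (∫⁻ s in Set.Ioi (0:ℝ),
            ENNReal.ofReal (vfun hT γ lam s) * Yfun g h γ (x, s)).toReal := by
      filter_upwards [ae_lt_top hZmeas KEYfin] with x hx
      have e1 : ∀ s ∈ Set.Ioi (0:ℝ), (∫ y in Set.Ioc (0:ℝ) x,
          rho s * (Real.exp (γ * s - lam * s - ∫ r in Set.Ioc (0:ℝ) s, rho (s - r))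
            * f (Real.exp (γ * s) * y)) * h (x - y))
          = (ENNReal.ofReal (vfun hT γ lam s) * Yfun g h γ (x, s)).toReal := by
        intro s hs
        rw [inner_eq x s, rhoE_eq γ lam hTmeas hTnn hTint hTprob hrho hs]
      rw [setIntegral_congr_fun measurableSet_Ioi e1]
      have hm4 : Measurable (fun s => ENNReal.ofReal (vfun hT γ lam s)
          * Yfun g h γ (x, s)) :=
        (vmeas.ennreal_ofReal).mul (Ymeas.comp (measurable_const.prodMk measurable_id))
      exact integral_toReal hm4.aemeasurable (ae_lt_top hm4 hx.ne)
    rw [integral_congr_ae hBae,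
      integral_toReal hZmeas.aemeasurable (ae_lt_top hZmeas KEYfin), KEY,
      ENNReal.toReal_mul, ENNReal.toReal_ofReal hL_nn, ENNReal.toReal_ofReal hIg_nn,
      hIg_eq]
  · exact laplace_lt_one hlam hTmeas hTnn hTint hTprob
end

section
/- Let G generate a C₀-semigroup {P(t)} of positive contractions on a closed subspace X₀ of an AL space X. Then {P(t)} is stochastic (‖P(t)u‖ = ‖u‖ for all u ∈ X₀ ∩ X₊ and t ≥ 0) if and only if there exists ω ∈ ℝ such that ‖λ R(λ,G) u‖ = ‖u‖ for all u ∈ X₀ ∩ X₊ and all λ > ω. -/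
open MeasureTheory Filter Topology

section Aux

variable {X₀ : Type*} [NormedAddCommGroup X₀] [Lattice X₀] [IsOrderedAddMonoid X₀]
    [HasSolidNorm X₀] [NormedSpace ℝ X₀]

/-- On an AL space, there is a positive norming functional. -/
theorem stmt_19_exists_phi
    (hadd : ∀ u v : X₀, 0 ≤ u → 0 ≤ v → ‖u + v‖ = ‖u‖ + ‖v‖) :
    ∃ φ : X₀ →L[ℝ] ℝ, (∀ u : X₀, 0 ≤ u → φ u = ‖u‖) ∧ (∀ u : X₀, φ u ≤ ‖u‖) := by
  set f : X₀ → ℝ := fun u => ‖u⁺‖ - ‖u⁻‖ with hfdef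
  have habs : ∀ u : X₀, ‖u⁺‖ + ‖u⁻‖ = ‖u‖ := fun u => by
    rw [← hadd _ _ (posPart_nonneg u) (negPart_nonneg u), posPart_add_negPart,
      norm_abs_eq_norm]
  have hfadd : ∀ u v : X₀, f (u + v) = f u + f v := by
    intro u v
    have key : (u + v)⁺ + (u⁻ + v⁻) = (u + v)⁻ + (u⁺ + v⁺) := by
      have h2 : (u + v)⁺ - (u + v)⁻ = (u⁺ + v⁺) - (u⁻ + v⁻) := by
        rw [posPart_sub_negPart,
          show u⁺ + v⁺ - (u⁻ + v⁻) = (u⁺ - u⁻) + (v⁺ - v⁻) by abel,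
          posPart_sub_negPart, posPart_sub_negPart]
      rw [sub_eq_sub_iff_add_eq_add] at h2
      rw [h2]; abel
    have hn1 : ‖(u + v)⁺ + (u⁻ + v⁻)‖ = ‖(u + v)⁺‖ + (‖u⁻‖ + ‖v⁻‖) := by
      rw [hadd _ _ (posPart_nonneg _) (add_nonneg (negPart_nonneg _) (negPart_nonneg _)),
        hadd _ _ (negPart_nonneg _) (negPart_nonneg _)]
    have hn2 : ‖(u + v)⁻ + (u⁺ + v⁺)‖ = ‖(u + v)⁻‖ + (‖u⁺‖ + ‖v⁺‖) := by
      rw [hadd _ _ (negPart_nonneg _) (add_nonneg (posPart_nonneg _) (posPart_nonneg _)),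
        hadd _ _ (posPart_nonneg _) (posPart_nonneg _)]
    have : ‖(u + v)⁺‖ + (‖u⁻‖ + ‖v⁻‖) = ‖(u + v)⁻‖ + (‖u⁺‖ + ‖v⁺‖) := by
      rw [← hn1, ← hn2, key]
    simp only [hfdef]
    linarith
  have hbound : ∀ u : X₀, |f u| ≤ ‖u‖ := by
    intro u
    have h := habs u
    have h1 : (0:ℝ) ≤ ‖u⁺‖ := norm_nonneg _
    have h2 : (0:ℝ) ≤ ‖u⁻‖ := norm_nonneg _
    rw [abs_le]; constructor <;> simp only [hfdef] <;> linarith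
  let F : X₀ →+ ℝ := AddMonoidHom.mk' f hfadd
  have hlip : LipschitzWith 1 F := by
    refine LipschitzWith.of_dist_le_mul fun u v => ?_
    have hsub : f (u - v) = f u - f v := by
      have := hfadd (u - v) v
      simp only [sub_add_cancel] at this
      linarith
    have : dist (F u) (F v) = |f (u - v)| := by
      rw [Real.dist_eq, hsub]; rfl
    rw [this, dist_eq_norm]
    simpa using hbound (u - v)
  refine ⟨F.toRealLinearMap hlip.continuous, ?_, ?_⟩
  · intro u hu
    have h1 : u⁺ = u := posPart_eq_self.mpr hu
    have h2 : u⁻ = 0 := negPart_eq_zero.mpr hu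
    show f u = ‖u‖
    simp [hfdef, h1, h2]
  · intro u
    exact le_trans (le_abs_self _) (hbound u)

end Aux

/-- A `C₀`-semigroup of positive contractions on a (closed subspace which is an) AL space is
stochastic iff for some `ω` the scaled resolvents `λ R(λ,G) = λ ∫_0^∞ e^{-λ t} P(t) dt` are
norm-preserving on the positive cone for all `λ > ω`. -/
theorem stmt_19 {X₀ : Type*} [NormedAddCommGroup X₀] [Lattice X₀] [IsOrderedAddMonoid X₀]
    [HasSolidNorm X₀] [NormedSpace ℝ X₀]
    [CompleteSpace X₀]
    (hadd : ∀ u v : X₀, 0 ≤ u → 0 ≤ v → ‖u + v‖ = ‖u‖ + ‖v‖)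
    (P : ℝ → X₀ →L[ℝ] X₀)
    (hP0 : P 0 = 1)
    (hPsem : ∀ s t : ℝ, 0 ≤ s → 0 ≤ t → P (s + t) = (P s).comp (P t))
    (hstrong : ∀ u : X₀, Tendsto (fun t : ℝ => P t u) (𝓝[≥] (0 : ℝ)) (𝓝 u))
    (hpos : ∀ t : ℝ, 0 ≤ t → ∀ u : X₀, 0 ≤ u → 0 ≤ P t u)
    (hcontr : ∀ t : ℝ, 0 ≤ t → ‖P t‖ ≤ 1) :
    (∀ t : ℝ, 0 ≤ t → ∀ u : X₀, 0 ≤ u → ‖P t u‖ = ‖u‖) ↔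
    (∃ ω : ℝ, ∀ lam : ℝ, ω < lam → ∀ u : X₀, 0 ≤ u →
      ‖lam • ∫ t in Set.Ioi (0 : ℝ), Real.exp (-lam * t) • P t u‖ = ‖u‖) := by
  -- basic facts
  have hPle : ∀ t : ℝ, 0 ≤ t → ∀ u : X₀, ‖P t u‖ ≤ ‖u‖ := by
    intro t ht u
    calc ‖P t u‖ ≤ ‖P t‖ * ‖u‖ := (P t).le_opNorm u
    _ ≤ 1 * ‖u‖ := mul_le_mul_of_nonneg_right (hcontr t ht) (norm_nonneg u)
    _ = ‖u‖ := one_mul _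
  -- continuity of orbits on [0, ∞)
  have horb : ∀ u : X₀, ContinuousOn (fun t => P t u) (Set.Ici (0:ℝ)) := by
    intro u t ht
    rw [Metric.continuousWithinAt_iff]
    intro ε hε
    obtain ⟨δ, hδ, hδ'⟩ := Metric.tendsto_nhdsWithin_nhds.mp (hstrong u) ε hε
    refine ⟨δ, hδ, fun s hs hst => ?_⟩
    have ht' : (0:ℝ) ≤ t := ht
    have hs' : (0:ℝ) ≤ s := hs
    rcases le_total t s with h | h
    · -- s = t + (s - t)
      have hh : (0:ℝ) ≤ s - t := by linarith
      have hdist : dist (s - t) 0 < δ := by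
        rw [Real.dist_eq] at hst ⊢
        rw [sub_zero, abs_of_nonneg hh]
        calc s - t ≤ |s - t| := le_abs_self _
        _ < δ := hst
      have hPh := hδ' (Set.mem_Ici.mpr hh) hdist
      have hcomp : P s = (P t).comp (P (s - t)) := by
        have := hPsem t (s - t) ht' hh
        rwa [add_sub_cancel] at this
      rw [dist_eq_norm, hcomp]
      have : (P t).comp (P (s - t)) u - P t u = P t (P (s - t) u - u) := by
        simp [map_sub]
      rw [this]
      calc ‖P t (P (s - t) u - u)‖ ≤ ‖P (s - t) u - u‖ := hPle t ht' _
      _ < ε := by rwa [dist_eq_norm] at hPh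
    · -- t = s + (t - s)
      have hh : (0:ℝ) ≤ t - s := by linarith
      have hdist : dist (t - s) 0 < δ := by
        rw [Real.dist_eq] at hst ⊢
        rw [sub_zero, abs_of_nonneg hh]
        calc t - s ≤ |s - t| := by rw [abs_sub_comm]; exact le_abs_self _
        _ < δ := hst
      have hPh := hδ' (Set.mem_Ici.mpr hh) hdist
      have hcomp : P t = (P s).comp (P (t - s)) := by
        have := hPsem s (t - s) hs' hh
        rwa [add_sub_cancel] at this
      rw [dist_comm, dist_eq_norm, hcomp]
      have : (P s).comp (P (t - s)) u - P s u = P s (P (t - s) u - u) := by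
        simp [map_sub]
      rw [this]
      calc ‖P s (P (t - s) u - u)‖ ≤ ‖P (t - s) u - u‖ := hPle s hs' _
      _ < ε := by rwa [dist_eq_norm] at hPh
  -- the exponential weight is integrable and we know its integral
  have hexpint : ∀ lam : ℝ, 0 < lam →
      IntegrableOn (fun t : ℝ => Real.exp (-lam * t)) (Set.Ioi 0) := fun lam hlam =>
    exp_neg_integrableOn_Ioi 0 hlam
  have hexpval : ∀ lam : ℝ, 0 < lam →
      (∫ t in Set.Ioi (0:ℝ), Real.exp (-lam * t)) = lam⁻¹ := by
    intro lam hlam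
    have : (∫ t in Set.Ioi (0:ℝ), Real.exp (-(lam * t)))
        = lam⁻¹ • ∫ x in Set.Ioi (lam * 0), Real.exp (-x) :=
      integral_comp_mul_left_Ioi (fun x => Real.exp (-x)) 0 hlam
    simp only [mul_zero, integral_exp_neg_Ioi_zero, smul_eq_mul, mul_one] at this
    simpa only [neg_mul] using this
  -- integrability of the resolvent integrand
  have hint : ∀ lam : ℝ, 0 < lam → ∀ u : X₀,
      IntegrableOn (fun t : ℝ => Real.exp (-lam * t) • P t u) (Set.Ioi 0) := by
    intro lam hlam u
    have hmeas : AEStronglyMeasurable (fun t : ℝ => Real.exp (-lam * t) • P t u)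
        (volume.restrict (Set.Ioi 0)) := by
      refine ContinuousOn.aestronglyMeasurable ?_ measurableSet_Ioi
      exact ((Real.continuous_exp.comp (continuous_const.mul continuous_id)).continuousOn).smul
        ((horb u).mono Set.Ioi_subset_Ici_self)
    refine Integrable.mono' ((hexpint lam hlam).mul_const ‖u‖) hmeas ?_
    refine (ae_restrict_iff' measurableSet_Ioi).mpr (ae_of_all _ fun t ht => ?_)
    have ht' : (0:ℝ) ≤ t := le_of_lt ht
    rw [norm_smul, Real.norm_eq_abs, abs_of_pos (Real.exp_pos _)]
    exact mul_le_mul_of_nonneg_left (hPle t ht' u) (Real.exp_pos _).le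
  -- norm bound of orbit integral
  have hnormint : ∀ lam : ℝ, 0 < lam → ∀ u : X₀,
      (∫ t in Set.Ioi (0:ℝ), Real.exp (-lam * t) * ‖P t u‖) ≤ lam⁻¹ * ‖u‖ := by
    intro lam hlam u
    have h1 : (∫ t in Set.Ioi (0:ℝ), Real.exp (-lam * t) * ‖P t u‖)
        ≤ ∫ t in Set.Ioi (0:ℝ), Real.exp (-lam * t) * ‖u‖ := by
      refine integral_mono_ae ?_ ((hexpint lam hlam).mul_const ‖u‖) ?_
      · have := (hint lam hlam u).norm
        simpa only [norm_smul, Real.norm_eq_abs, abs_of_pos (Real.exp_pos _)] using this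
      · refine (ae_restrict_iff' measurableSet_Ioi).mpr (ae_of_all _ fun t ht => ?_)
        exact mul_le_mul_of_nonneg_left (hPle t (le_of_lt ht) u) (Real.exp_pos _).le
    rw [integral_mul_const, hexpval lam hlam] at h1
    exact h1
  constructor
  · -- forward: stochastic implies resolvent norm preserving, with ω = 0
    intro hst
    obtain ⟨φ, hφpos, hφle⟩ := stmt_19_exists_phi hadd
    refine ⟨0, fun lam hlam u hu => ?_⟩
    set v := ∫ t in Set.Ioi (0:ℝ), Real.exp (-lam * t) • P t u with hv
    have hφv : φ (lam • v) = ‖u‖ := by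
      have hcomm : φ v = ∫ t in Set.Ioi (0:ℝ), φ (Real.exp (-lam * t) • P t u) :=
        (ContinuousLinearMap.integral_comp_comm φ (hint lam hlam u)).symm
      have heq : (fun t : ℝ => φ (Real.exp (-lam * t) • P t u))
          =ᵐ[volume.restrict (Set.Ioi 0)] fun t => Real.exp (-lam * t) * ‖u‖ := by
        refine (ae_restrict_iff' measurableSet_Ioi).mpr (ae_of_all _ fun t ht => ?_)
        have ht' : (0:ℝ) ≤ t := le_of_lt ht
        show φ (Real.exp (-lam * t) • P t u) = Real.exp (-lam * t) * ‖u‖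
        rw [_root_.map_smul, smul_eq_mul, hφpos _ (hpos t ht' u hu), hst t ht' u hu]
      rw [_root_.map_smul, smul_eq_mul, hcomm, integral_congr_ae heq, integral_mul_const,
        hexpval lam hlam]
      field_simp
    have hle2 : ‖lam • v‖ ≤ ‖u‖ := by
      rw [norm_smul, Real.norm_eq_abs, abs_of_pos hlam]
      have h1 : ‖v‖ ≤ ∫ t in Set.Ioi (0:ℝ), ‖Real.exp (-lam * t) • P t u‖ :=
        norm_integral_le_integral_norm _
      have h2 : (∫ t in Set.Ioi (0:ℝ), ‖Real.exp (-lam * t) • P t u‖)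
          = ∫ t in Set.Ioi (0:ℝ), Real.exp (-lam * t) * ‖P t u‖ := by
        congr 1
        ext t
        rw [norm_smul, Real.norm_eq_abs, abs_of_pos (Real.exp_pos _)]
      rw [h2] at h1
      have h3 := hnormint lam hlam u
      calc lam * ‖v‖ ≤ lam * (lam⁻¹ * ‖u‖) :=
        mul_le_mul_of_nonneg_left (le_trans h1 h3) hlam.le
      _ = ‖u‖ := by field_simp
    have hge : ‖u‖ ≤ ‖lam • v‖ := by
      calc ‖u‖ = φ (lam • v) := hφv.symm
      _ ≤ ‖lam • v‖ := hφle _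
    linarith
  · -- backward
    rintro ⟨ω, hres⟩ t₀ ht₀ u hu
    set lam := max ω 0 + 1 with hlamdef
    have hlamω : ω < lam := lt_of_le_of_lt (le_max_left ω 0) (lt_add_one _)
    have hlam : (0:ℝ) < lam := lt_of_le_of_lt (le_max_right ω 0) (lt_add_one _)
    have hkey := hres lam hlamω u hu
    set g : ℝ → ℝ := fun t => Real.exp (-lam * t) * ‖P t u‖ with hg
    have hgint : IntegrableOn g (Set.Ioi 0) := by
      have := (hint lam hlam u).norm
      simpa only [IntegrableOn, hg, norm_smul, Real.norm_eq_abs, abs_of_pos (Real.exp_pos _)] using this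
    -- lower bound on ∫ g
    have hlow : lam⁻¹ * ‖u‖ ≤ ∫ t in Set.Ioi (0:ℝ), g t := by
      have h1 : ‖u‖ ≤ lam * ∫ t in Set.Ioi (0:ℝ), g t := by
        rw [← hkey, norm_smul, Real.norm_eq_abs, abs_of_pos hlam]
        refine mul_le_mul_of_nonneg_left ?_ hlam.le
        have h1 : ‖∫ t in Set.Ioi (0:ℝ), Real.exp (-lam * t) • P t u‖
            ≤ ∫ t in Set.Ioi (0:ℝ), ‖Real.exp (-lam * t) • P t u‖ :=
          norm_integral_le_integral_norm _
        have h2 : (∫ t in Set.Ioi (0:ℝ), ‖Real.exp (-lam * t) • P t u‖)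
            = ∫ t in Set.Ioi (0:ℝ), g t := by
          congr 1
          ext t
          rw [norm_smul, Real.norm_eq_abs, abs_of_pos (Real.exp_pos _)]
        rwa [h2] at h1
      calc lam⁻¹ * ‖u‖ ≤ lam⁻¹ * (lam * ∫ t in Set.Ioi (0:ℝ), g t) :=
        mul_le_mul_of_nonneg_left h1 (inv_nonneg.mpr hlam.le)
      _ = ∫ t in Set.Ioi (0:ℝ), g t := by field_simp
    have hup := hnormint lam hlam u
    have hintval : (∫ t in Set.Ioi (0:ℝ), g t) = lam⁻¹ * ‖u‖ := le_antisymm hup hlow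
    -- the defect function has zero integral
    set h : ℝ → ℝ := fun t => Real.exp (-lam * t) * ‖u‖ - g t with hh
    have hhint : IntegrableOn h (Set.Ioi 0) := ((hexpint lam hlam).mul_const ‖u‖).sub hgint
    have hhzero : (∫ t in Set.Ioi (0:ℝ), h t) = 0 := by
      rw [integral_sub ((hexpint lam hlam).mul_const ‖u‖) hgint, integral_mul_const,
        hexpval lam hlam, hintval, sub_self]
    have hhnn : 0 ≤ᵐ[volume.restrict (Set.Ioi 0)] h := by
      refine (ae_restrict_iff' measurableSet_Ioi).mpr (ae_of_all _ fun t ht => ?_)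
      have : ‖P t u‖ ≤ ‖u‖ := hPle t (le_of_lt ht) u
      simp only [hh, hg, Pi.zero_apply, sub_nonneg]
      exact mul_le_mul_of_nonneg_left this (Real.exp_pos _).le
    have hae : h =ᵐ[volume.restrict (Set.Ioi 0)] 0 :=
      (integral_eq_zero_iff_of_nonneg_ae hhnn hhint).mp hhzero
    have hae' : ∀ᵐ t ∂(volume : Measure ℝ), t ∈ Set.Ioi (0:ℝ) → h t = 0 :=
      (ae_restrict_iff' measurableSet_Ioi).mp hae
    -- extract a point s > t₀ where ‖P s u‖ = ‖u‖
    have hexists : ∃ s : ℝ, t₀ < s ∧ ‖P s u‖ = ‖u‖ := by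
      by_contra hc
      push_neg at hc
      have hsub : Set.Ioi t₀ ⊆ {t : ℝ | ¬(t ∈ Set.Ioi (0:ℝ) → h t = 0)} := by
        intro s hs
        simp only [Set.mem_setOf_eq, Classical.not_imp]
        have hs0 : (0:ℝ) < s := lt_of_le_of_lt ht₀ hs
        refine ⟨hs0, ?_⟩
        have hne := hc s hs
        have hle := hPle s hs0.le u
        have : ‖P s u‖ < ‖u‖ := lt_of_le_of_ne hle hne
        simp only [hh, hg, sub_eq_zero]
        intro heq
        have := mul_left_cancel₀ (ne_of_gt (Real.exp_pos (-lam * s))) heq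
        linarith
      have hnull : (volume : Measure ℝ) {t : ℝ | ¬(t ∈ Set.Ioi (0:ℝ) → h t = 0)} = 0 := hae'
      have : (volume : Measure ℝ) (Set.Ioi t₀) = 0 := measure_mono_null hsub hnull
      rw [Real.volume_Ioi] at this
      exact ENNReal.top_ne_zero this
    obtain ⟨s, hs, hsnorm⟩ := hexists
    -- antitonicity: ‖P s u‖ ≤ ‖P t₀ u‖ since s ≥ t₀
    have hanti : ‖P s u‖ ≤ ‖P t₀ u‖ := by
      have hcomp : P s = (P (s - t₀)).comp (P t₀) := by
        have := hPsem (s - t₀) t₀ (by linarith) ht₀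
        rwa [sub_add_cancel] at this
      rw [hcomp]
      exact hPle (s - t₀) (by linarith) _
    have hle := hPle t₀ ht₀ u
    rw [hsnorm] at hanti
    linarith
end
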